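/- arXiv:1508.02559 — 5 statements merged into one kernel-verified Lean document; each statement's English description precedes it below -/
import Mathlib

section
/- For every finite simple graph G with maximum degree Δ ≥ 2, π(G) ≤ π_ℓ(G) ≤ ⌈12.92·(Δ − 1)²⌉. -/
open SimpleGraph
open scoped Classical

/-- A vertex colouring `φ` of `G` is nonrepetitive if for no path of `G` the sequence of
colours along its vertices is a repetition, i.e. of the form `l ++ l` with `l` nonempty. -/
def Nonrepetitive {V β : Type*} (G : SimpleGraph V) (φ : V → β) : Prop :=
  ∀ ⦃u v : V⦄ (p : G.Walk u v), p.IsPath →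
    ∀ l : List β, l ≠ [] → p.support.map φ ≠ l ++ l

/-- The Thue chromatic number of `G`: the least number of colours in a nonrepetitive
vertex colouring of `G`. -/
noncomputable def thueNumber {V : Type*} (G : SimpleGraph V) : ℕ :=
  sInf {k | ∃ φ : V → Fin k, Nonrepetitive G φ}

/-- The Thue choice number of `G`: the least `k` such that from any assignment of lists of
size at least `k` to the vertices one can choose a nonrepetitive vertex colouring. -/
noncomputable def thueChoiceNumber {V : Type*} (G : SimpleGraph V) : ℕ :=
  sInf {k | ∀ L : V → Finset ℕ, (∀ v, k ≤ (L v).card) →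
    ∃ φ : V → ℕ, (∀ v, φ v ∈ L v) ∧ Nonrepetitive G φ}


variable {V : Type} [Fintype V]

/-- Finset of nodup `G.Adj`-chains with `s+1` vertices starting at `x`. -/
noncomputable def Efin (G : SimpleGraph V) [DecidableRel G.Adj] (x : V) : ℕ → Finset (List V)
  | 0 => {[x]}
  | (s+1) => (G.neighborFinset x).biUnion fun y =>
      ((Efin G y s).filter fun l => x ∉ l).image fun l => x :: l

lemma mem_Efin {G : SimpleGraph V} [DecidableRel G.Adj] :
    ∀ {s : ℕ} {x : V} {u : List V}, u ∈ Efin G x s ↔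
      u.length = s + 1 ∧ u.Chain' G.Adj ∧ u.Nodup ∧ u.head? = some x := by
  intro s
  induction s with
  | zero =>
    intro x u
    simp only [Efin, Finset.mem_singleton]
    constructor
    · rintro rfl; simp; exact List.isChain_singleton x
    · rintro ⟨h1, -, -, h4⟩
      match u, h1 with
      | [a], _ => simp_all
  | succ s ih =>
    intro x u
    simp only [Efin, Finset.mem_biUnion, Finset.mem_image, Finset.mem_filter,
      SimpleGraph.mem_neighborFinset]
    constructor
    · rintro ⟨y, hxy, l, ⟨hl, hxl⟩, rfl⟩
      obtain ⟨h1, h2, h3, h4⟩ := ih.1 hl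
      refine ⟨by simp [h1], ?_, by simp [h3, hxl], rfl⟩
      rw [List.Chain', List.isChain_cons]
      refine ⟨fun z hz => ?_, h2⟩
      rw [h4, Option.mem_def, Option.some.injEq] at hz
      subst hz; exact hxy
    · rintro ⟨h1, h2, h3, h4⟩
      match u, h1 with
      | a :: l, h1 =>
        simp only [List.head?_cons, Option.some.injEq] at h4
        subst h4
        have hlen : l.length = s + 1 := by simpa using h1
        have hlne : l ≠ [] := by intro h; simp [h] at hlen
        obtain ⟨b, l', rfl⟩ := List.exists_cons_of_ne_nil hlne
        rw [List.Chain', List.isChain_cons_cons] at h2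
        refine ⟨b, h2.1, b :: l', ⟨ih.2 ⟨hlen, h2.2, (List.nodup_cons.1 h3).2, rfl⟩,
          (List.nodup_cons.1 h3).1⟩, rfl⟩

section
variable {G : SimpleGraph V} [DecidableRel G.Adj]

lemma card_Efin_avoid :
    ∀ (s : ℕ) (x w : V), G.Adj w x →
      ((Efin G x s).filter fun l => w ∉ l).card ≤ (G.maxDegree - 1) ^ s := by
  intro s
  induction s with
  | zero => intro x w _; simpa using (Finset.card_filter_le _ _).trans (by simp [Efin])
  | succ s ih =>
    intro x w hwx
    have hsub : ((Efin G x (s+1)).filter fun l => w ∉ l) ⊆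
        ((G.neighborFinset x).erase w).biUnion fun y =>
          ((Efin G y s).filter fun l => x ∉ l).image fun l => x :: l := by
      intro u hu
      rw [Finset.mem_filter] at hu
      obtain ⟨hu, hwu⟩ := hu
      simp only [Efin, Finset.mem_biUnion, Finset.mem_image, Finset.mem_filter] at hu ⊢
      obtain ⟨y, hy, l, hl, rfl⟩ := hu
      have hyl : y ∈ l := by
        have := (mem_Efin.1 hl.1).2.2.2
        cases l with
        | nil => simp at this
        | cons a t => simp_all
      refine ⟨y, Finset.mem_erase.2 ⟨?_, hy⟩, l, hl, rfl⟩
      intro h; subst h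
      exact hwu (List.mem_cons_of_mem _ hyl)
    calc ((Efin G x (s+1)).filter fun l => w ∉ l).card
        ≤ _ := Finset.card_le_card hsub
      _ ≤ ∑ y ∈ (G.neighborFinset x).erase w,
            (((Efin G y s).filter fun l => x ∉ l).image fun l => x :: l).card :=
          Finset.card_biUnion_le
      _ ≤ ∑ y ∈ (G.neighborFinset x).erase w, (G.maxDegree - 1) ^ s := by
          refine Finset.sum_le_sum fun y hy => ?_
          refine (Finset.card_image_le).trans (ih y x ?_)
          exact (by simpa using (Finset.mem_erase.1 hy).2)
      _ ≤ (G.maxDegree - 1) * (G.maxDegree - 1) ^ s := by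
          rw [Finset.sum_const, smul_eq_mul]
          refine Nat.mul_le_mul_right _ ?_
          have : w ∈ G.neighborFinset x := by simpa using hwx.symm
          rw [Finset.card_erase_of_mem this]
          have hd := G.degree_le_maxDegree x
          rw [← card_neighborFinset_eq_degree] at hd
          omega
      _ = (G.maxDegree - 1) ^ (s+1) := by ring

lemma card_Efin (s : ℕ) (x : V) (hs : 1 ≤ s) :
    (Efin G x s).card ≤ G.maxDegree * (G.maxDegree - 1) ^ (s - 1) := by
  obtain ⟨s, rfl⟩ := Nat.exists_eq_add_of_le' hs
  simp only [Efin, Nat.add_sub_cancel]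
  calc (_ : Finset _).card ≤ ∑ y ∈ G.neighborFinset x,
        (((Efin G y s).filter fun l => x ∉ l).image fun l => x :: l).card :=
        Finset.card_biUnion_le
    _ ≤ ∑ y ∈ G.neighborFinset x, (G.maxDegree - 1) ^ s := by
        refine Finset.sum_le_sum fun y hy => ?_
        exact (Finset.card_image_le).trans (card_Efin_avoid s y x (by simpa using hy))
    _ ≤ G.maxDegree * (G.maxDegree - 1) ^ s := by
        rw [Finset.sum_const, smul_eq_mul]
        refine Nat.mul_le_mul_right _ ?_
        rw [card_neighborFinset_eq_degree]
        exact G.degree_le_maxDegree x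

end

/-- Admissible colourings: values in `L v` on `S`, `0` outside. -/
noncomputable def Dfin (L : V → Finset ℕ) (S : Finset V) : Finset (V → ℕ) :=
  Fintype.piFinset fun v => if v ∈ S then L v else {0}

/-- `f` is nonrepetitive on the vertex set `S`. -/
def NRon (G : SimpleGraph V) (S : Finset V) (f : V → ℕ) : Prop :=
  ∀ u : List V, u.Chain' G.Adj → u.Nodup → (∀ x ∈ u, x ∈ S) →
    ∀ l : List ℕ, l ≠ [] → u.map f ≠ l ++ l

noncomputable def Cfin (G : SimpleGraph V) (L : V → Finset ℕ) (S : Finset V) :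
    Finset (V → ℕ) :=
  (Dfin L S).filter (NRon G S)

lemma mem_Dfin {L : V → Finset ℕ} {S : Finset V} {f : V → ℕ} :
    f ∈ Dfin L S ↔ (∀ v ∈ S, f v ∈ L v) ∧ ∀ v ∉ S, f v = 0 := by
  simp only [Dfin, Fintype.mem_piFinset]
  constructor
  · intro h
    refine ⟨fun v hv => by simpa [hv] using h v, fun v hv => by simpa [hv] using h v⟩
  · intro h v
    by_cases hv : v ∈ S <;> simp [hv, h.1 v, h.2 v]

lemma NRon_anti {G : SimpleGraph V} {S T : Finset V} {f g : V → ℕ} (hTS : T ⊆ S)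
    (hfg : ∀ x ∈ T, g x = f x) (hf : NRon G S f) : NRon G T g := by
  intro u hc hn hsub l hl
  have : u.map g = u.map f := List.map_congr_left fun x hx => hfg x (hsub x hx)
  rw [this]
  exact hf u hc hn (fun x hx => hTS (hsub x hx)) l hl

lemma card_Cfin_empty {G : SimpleGraph V} (L : V → Finset ℕ) :
    (Cfin G L ∅).card = 1 := by
  have h1 : Dfin L ∅ = {fun _ => 0} := by
    ext f
    rw [mem_Dfin]
    simp [funext_iff]
  have : Cfin G L ∅ = {fun _ => 0} := by
    rw [Cfin, h1]
    refine Finset.filter_true_of_mem fun f hf => ?_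
    intro u hc hn hsub l hl
    have : u = [] := by
      cases u with
      | nil => rfl
      | cons a t => exact absurd (hsub a (by simp)) (by simp)
    subst this
    intro h
    exact hl (by simpa using h.symm)
  simp [this]

/-- canonical "repetition skeletons": lists of `2t` vertices inside `S`,
forming a nodup chain, with `v` in the first half. -/
noncomputable def Pt (G : SimpleGraph V) [DecidableRel G.Adj] (S : Finset V) (v : V)
    (t : ℕ) : Finset (List V) :=
  ((Finset.univ : Finset V).biUnion fun x => Efin G x (2*t - 1)).filter
    fun u => (∀ x ∈ u, x ∈ S) ∧ v ∈ u.take t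

lemma mem_Pt {G : SimpleGraph V} [DecidableRel G.Adj] {S : Finset V} {v : V} {t : ℕ}
    (ht : 1 ≤ t) {u : List V} (hlen : u.length = 2*t) (hc : u.Chain' G.Adj)
    (hn : u.Nodup) (hS : ∀ x ∈ u, x ∈ S) (hv : v ∈ u.take t) :
    u ∈ Pt G S v t := by
  rw [Pt, Finset.mem_filter]
  refine ⟨?_, hS, hv⟩
  rw [Finset.mem_biUnion]
  have hne : u ≠ [] := by intro h; rw [h] at hlen; simp at hlen; omega
  obtain ⟨a, u', rfl⟩ := List.exists_cons_of_ne_nil hne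
  exact ⟨a, Finset.mem_univ a, mem_Efin.2 ⟨by omega, hc, hn, rfl⟩⟩

lemma elems_Pt {G : SimpleGraph V} [DecidableRel G.Adj] {S : Finset V} {v : V} {t : ℕ}
    {u : List V} (hu : u ∈ Pt G S v t) :
    u.length = 2*t ∧ u.Chain' G.Adj ∧ u.Nodup ∧ (∀ x ∈ u, x ∈ S) ∧ v ∈ u.take t := by
  rw [Pt, Finset.mem_filter, Finset.mem_biUnion] at hu
  obtain ⟨⟨x, -, hx⟩, h1, h2⟩ := hu
  obtain ⟨hl, hc, hn, -⟩ := mem_Efin.1 hx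
  refine ⟨?_, hc, hn, h1, h2⟩
  rw [hl]
  have : 1 ≤ t := by
    by_contra h
    have : t = 0 := by omega
    subst this
    simp at h2
  omega

lemma card_Pt_le {G : SimpleGraph V} [DecidableRel G.Adj] {S : Finset V} {v : V} {t : ℕ}
    (ht : 1 ≤ t) :
    (Pt G S v t).card ≤
      ∑ i ∈ Finset.range t, (Efin G v i).card * (Efin G v (2*t - 1 - i)).card := by
  have hsub : Pt G S v t ⊆ (Finset.range t).biUnion fun i =>
      ((Efin G v i) ×ˢ (Efin G v (2*t - 1 - i))).image fun p => p.1.reverse ++ p.2.tail := by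
    intro u hu
    obtain ⟨hlen, hc, hn, hS, hv⟩ := elems_Pt hu
    obtain ⟨i, hi, hiv⟩ := List.mem_iff_getElem.1 hv
    rw [List.length_take, hlen] at hi
    have hit : i < t := lt_of_lt_of_le hi (min_le_left _ _)
    have hi2t : i < u.length := by omega
    have hgi : u[i] = v := by
      rw [List.getElem_take] at hiv; exact hiv
    rw [Finset.mem_biUnion]
    refine ⟨i, Finset.mem_range.2 hit, ?_⟩
    rw [Finset.mem_image]
    refine ⟨((u.take (i+1)).reverse, u.drop i), ?_, ?_⟩
    · rw [Finset.mem_product]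
      constructor
      · rw [mem_Efin]
        refine ⟨by simp; omega, ?_, by rw [List.nodup_reverse]; exact hn.sublist (List.take_sublist _ _), ?_⟩
        · rw [List.Chain', List.isChain_reverse]
          exact (List.IsChain.take hc (i+1)).imp fun a b h => h.symm
        · have : u.take (i+1) = u.take i ++ [v] := by
            rw [List.take_succ, List.getElem?_eq_getElem hi2t, hgi]
            rfl
          rw [this, List.reverse_append]
          rfl
      · rw [mem_Efin]
        refine ⟨by simp; omega, List.IsChain.drop hc i, hn.sublist (List.drop_sublist _ _), ?_⟩
        rw [List.head?_drop, List.getElem?_eq_getElem hi2t, hgi]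
    · simp only [List.reverse_reverse, List.tail_drop]
      exact List.take_append_drop _ _
  calc (Pt G S v t).card ≤ _ := Finset.card_le_card hsub
    _ ≤ ∑ i ∈ Finset.range t,
        (((Efin G v i) ×ˢ (Efin G v (2*t - 1 - i))).image fun p => p.1.reverse ++ p.2.tail).card :=
      Finset.card_biUnion_le
    _ ≤ _ := by
      refine Finset.sum_le_sum fun i _ => ?_
      exact (Finset.card_image_le).trans (le_of_eq (Finset.card_product _ _))

lemma card_Efin_zero {G : SimpleGraph V} [DecidableRel G.Adj] (x : V) :
    (Efin G x 0).card = 1 := by simp [Efin]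

lemma card_Pt_real {G : SimpleGraph V} [DecidableRel G.Adj] {S : Finset V} {v : V} {t : ℕ}
    (ht : 1 ≤ t) (hΔ : 2 ≤ G.maxDegree) :
    ((Pt G S v t).card : ℝ) * ((G.maxDegree : ℝ) - 1) ≤
      t * (G.maxDegree : ℝ)^2 * (((G.maxDegree : ℝ) - 1)^2)^(t-1) := by
  set Δ := G.maxDegree with hΔdef
  have hcast : ((Δ - 1 : ℕ) : ℝ) = (Δ : ℝ) - 1 := by
    have : 1 ≤ Δ := by omega
    push_cast [this]; ring
  have hΔ1 : (1:ℝ) ≤ (Δ:ℝ) - 1 := by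
    have : (2:ℝ) ≤ (Δ:ℝ) := by exact_mod_cast hΔ
    linarith
  have hΔnn : (0:ℝ) ≤ (Δ:ℝ) := by positivity
  have key : ∀ i ∈ Finset.range t,
      ((Efin G v i).card * (Efin G v (2*t - 1 - i)).card : ℝ) * ((Δ:ℝ) - 1) ≤
        (Δ:ℝ)^2 * (((Δ:ℝ) - 1)^2)^(t-1) := by
    intro i hi
    rw [Finset.mem_range] at hi
    have hpow : (((Δ:ℝ) - 1)^2)^(t-1) = ((Δ:ℝ) - 1)^(2*t-2) := by
      rw [← pow_mul]
      congr 1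
      omega
    rw [hpow]
    have hnn : (0:ℝ) ≤ ((Δ:ℝ)-1)^(2*t-2) := by positivity
    rcases Nat.eq_zero_or_pos i with hi0 | hi1
    · subst hi0
      have h1 : ((Efin G v (2*t - 1 - 0)).card : ℝ) ≤ (Δ:ℝ) * ((Δ:ℝ)-1)^(2*t-2) := by
        have h := card_Efin (G := G) (2*t-1-0) v (by omega)
        calc ((Efin G v (2*t-1-0)).card : ℝ) ≤ ((Δ * (Δ - 1)^(2*t-1-0-1) : ℕ) : ℝ) := by
              exact_mod_cast h
          _ = (Δ:ℝ) * ((Δ:ℝ)-1)^(2*t-2) := by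
              push_cast [hcast]
              rw [show 2*t-1-0-1 = 2*t-2 from by omega]
      calc ((Efin G v 0).card * (Efin G v (2*t - 1 - 0)).card : ℝ) * ((Δ:ℝ) - 1)
          = ((Efin G v (2*t - 1 - 0)).card : ℝ) * ((Δ:ℝ) - 1) := by
            rw [card_Efin_zero]; push_cast; ring
        _ ≤ ((Δ:ℝ) * ((Δ:ℝ)-1)^(2*t-2)) * ((Δ:ℝ) - 1) :=
            mul_le_mul_of_nonneg_right h1 (by linarith)
        _ = ((Δ:ℝ) * ((Δ:ℝ)-1)) * ((Δ:ℝ)-1)^(2*t-2) := by ring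
        _ ≤ ((Δ:ℝ) * (Δ:ℝ)) * ((Δ:ℝ)-1)^(2*t-2) := by
            refine mul_le_mul_of_nonneg_right ?_ hnn
            nlinarith
        _ = (Δ:ℝ)^2 * ((Δ:ℝ)-1)^(2*t-2) := by ring
    · have h1 : ((Efin G v i).card : ℝ) ≤ (Δ:ℝ) * ((Δ:ℝ)-1)^(i-1) := by
        have h := card_Efin (G := G) i v hi1
        calc ((Efin G v i).card : ℝ) ≤ ((Δ * (Δ - 1)^(i-1) : ℕ) : ℝ) := by exact_mod_cast h
          _ = _ := by push_cast [hcast]; ring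
      have h2 : ((Efin G v (2*t-1-i)).card : ℝ) ≤ (Δ:ℝ) * ((Δ:ℝ)-1)^(2*t-2-i) := by
        have h := card_Efin (G := G) (2*t-1-i) v (by omega)
        calc ((Efin G v (2*t-1-i)).card : ℝ) ≤ ((Δ * (Δ - 1)^(2*t-1-i-1) : ℕ) : ℝ) := by
              exact_mod_cast h
          _ = _ := by
              push_cast [hcast]
              rw [show 2*t-1-i-1 = 2*t-2-i from by omega]
      have hmul : ((Δ:ℝ)-1)^(i-1) * ((Δ:ℝ)-1)^(2*t-2-i) * ((Δ:ℝ)-1) = ((Δ:ℝ)-1)^(2*t-2) := by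
        rw [← pow_add, ← pow_succ]
        congr 1
        omega
      have e2 : (0:ℝ) ≤ ((Efin G v (2*t-1-i)).card : ℝ) := by positivity
      calc ((Efin G v i).card * (Efin G v (2*t - 1 - i)).card : ℝ) * ((Δ:ℝ) - 1)
          ≤ (((Δ:ℝ) * ((Δ:ℝ)-1)^(i-1)) * ((Δ:ℝ) * ((Δ:ℝ)-1)^(2*t-2-i))) * ((Δ:ℝ)-1) := by
            refine mul_le_mul_of_nonneg_right ?_ (by linarith)
            exact mul_le_mul h1 h2 e2 (by positivity)
        _ = (Δ:ℝ)^2 * (((Δ:ℝ)-1)^(i-1) * ((Δ:ℝ)-1)^(2*t-2-i) * ((Δ:ℝ)-1)) := by ring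
        _ = _ := by rw [hmul]
  calc ((Pt G S v t).card : ℝ) * ((Δ:ℝ) - 1)
      ≤ (∑ i ∈ Finset.range t, ((Efin G v i).card * (Efin G v (2*t - 1 - i)).card : ℝ))
          * ((Δ:ℝ) - 1) := by
        refine mul_le_mul_of_nonneg_right ?_ (by linarith)
        have h := card_Pt_le (G := G) (S := S) (v := v) ht
        calc ((Pt G S v t).card : ℝ)
            ≤ ((∑ i ∈ Finset.range t, (Efin G v i).card * (Efin G v (2*t - 1 - i)).card : ℕ) : ℝ) := by
              exact_mod_cast h
          _ = _ := by push_cast; ring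
    _ = ∑ i ∈ Finset.range t,
          ((Efin G v i).card * (Efin G v (2*t - 1 - i)).card : ℝ) * ((Δ:ℝ) - 1) := by
        rw [Finset.sum_mul]
    _ ≤ ∑ i ∈ Finset.range t, (Δ:ℝ)^2 * (((Δ:ℝ) - 1)^2)^(t-1) := Finset.sum_le_sum key
    _ = t * (Δ:ℝ)^2 * (((Δ:ℝ) - 1)^2)^(t-1) := by
        rw [Finset.sum_const, Finset.card_range]
        ring

lemma exists_rep {G : SimpleGraph V} [DecidableRel G.Adj] {S : Finset V} {v : V}
    {ψ φ : V → ℕ} (hψ : NRon G (S.erase v) ψ) (hφψ : ∀ x, x ≠ v → φ x = ψ x)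
    (hbad : ¬ NRon G S φ) :
    ∃ t, 1 ≤ t ∧ 2*t ≤ S.card ∧
      ∃ u ∈ Pt G S v t, (u.take t).map φ = (u.drop t).map φ := by
  rw [NRon] at hbad
  push_neg at hbad
  obtain ⟨u, hc, hn, hS, l, hl, hrep⟩ := hbad
  -- the repetition must go through v
  have hvu : v ∈ u := by
    by_contra hvu
    refine hψ u hc hn (fun x hx => Finset.mem_erase.2 ⟨?_, hS x hx⟩) l hl ?_
    · rintro rfl; exact hvu hx
    · rw [← hrep]
      exact (List.map_congr_left fun x hx => (hφψ x (by rintro rfl; exact hvu hx))).symm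
  set t := l.length with htdef
  have ht : 1 ≤ t := by
    cases l with
    | nil => exact absurd rfl hl
    | cons a l' => simp [htdef]
  have hlen : u.length = 2*t := by
    have := congrArg List.length hrep
    simp at this
    omega
  -- canonical form machinery
  have main : ∀ (u' : List V) (l' : List ℕ), u'.Chain' G.Adj → u'.Nodup →
      (∀ x ∈ u', x ∈ S) → l'.length = t → u'.map φ = l' ++ l' → v ∈ u'.take t →
      ∃ t', 1 ≤ t' ∧ 2*t' ≤ S.card ∧
        ∃ w ∈ Pt G S v t', (w.take t').map φ = (w.drop t').map φ := by
    intro u' l' hc' hn' hS' hlt hrep' hvt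
    have hlen' : u'.length = 2*t := by
      have := congrArg List.length hrep'
      simp [hlt] at this
      omega
    have hcard : 2*t ≤ S.card := by
      have hsub : u'.toFinset ⊆ S := fun x hx => hS' x (List.mem_toFinset.1 hx)
      have := Finset.card_le_card hsub
      rw [List.toFinset_card_of_nodup hn'] at this
      omega
    refine ⟨t, ht, hcard, ⟨u', mem_Pt ht hlen' hc' hn' hS' hvt, ?_⟩⟩
    have h1 : (u'.take t).map φ = l' := by
      rw [List.map_take, hrep', ← hlt, List.take_left]
    have h2 : (u'.drop t).map φ = l' := by
      rw [List.map_drop, hrep', ← hlt, List.drop_left]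
    rw [h1, h2]
  rcases List.mem_append.1 (by rw [List.take_append_drop t u]; exact hvu) with hv1 | hv2
  · exact main u l hc hn hS rfl hrep hv1
  · refine main u.reverse l.reverse ?_ (List.nodup_reverse.2 hn)
      (fun x hx => hS x (List.mem_reverse.1 hx)) (by simp [htdef]) ?_ ?_
    · rw [List.Chain', List.isChain_reverse]
      exact List.IsChain.imp (fun a b h => h.symm) hc
    · rw [List.map_reverse, hrep, List.reverse_append]
    · rw [List.take_reverse, hlen, show 2*t - t = t from by omega]
      rw [List.mem_reverse]
      exact hv2

lemma card_badu_le {G : SimpleGraph V} [DecidableRel G.Adj] {L : V → Finset ℕ}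
    {S : Finset V} {v : V} (hv : v ∈ S) {t : ℕ} (ht : 1 ≤ t) {u : List V}
    (hu : u ∈ Pt G S v t) :
    (((Cfin G L (S.erase v)) ×ˢ (L v)).filter fun p =>
      (u.take t).map (Function.update p.1 v p.2) =
        (u.drop t).map (Function.update p.1 v p.2)).card
    ≤ (Cfin G L (S \ (u.take t).toFinset)).card := by
  obtain ⟨hlen, hc, hn, hS, hvt⟩ := elems_Pt hu
  set F := (u.take t).toFinset with hFdef
  have hvF : v ∈ F := List.mem_toFinset.2 hvt
  have hFS : F ⊆ S := fun x hx => hS x (List.mem_of_mem_take (List.mem_toFinset.1 hx))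
  have hlt : (u.take t).length = t := by rw [List.length_take]; omega
  have hld : (u.drop t).length = t := by rw [List.length_drop]; omega
  have hsecond : ∀ j, j < t → ∀ (hjl : t + j < u.length), u[t+j] ∈ S \ F := by
    intro j hj hjl
    rw [Finset.mem_sdiff]
    refine ⟨hS _ (List.getElem_mem _), ?_⟩
    intro hmem
    rw [hFdef, List.mem_toFinset] at hmem
    obtain ⟨i, hi, hieq⟩ := List.mem_iff_getElem.1 hmem
    rw [hlt] at hi
    rw [List.getElem_take] at hieq
    have := (hn.getElem_inj_iff).1 hieq
    omega
  set r : (V → ℕ) × ℕ → (V → ℕ) := fun p =>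
    fun x => if x ∈ S \ F then Function.update p.1 v p.2 x else 0 with hrdef
  refine Finset.card_le_card_of_injOn r ?_ ?_
  · -- maps into Cfin (S \ F)
    intro p hp
    rw [Finset.mem_coe] at hp ⊢
    rw [Finset.mem_filter, Finset.mem_product] at hp
    obtain ⟨⟨hp1, hp2⟩, hrep⟩ := hp
    rw [Cfin, Finset.mem_filter] at hp1
    obtain ⟨hp1D, hp1N⟩ := hp1
    rw [mem_Dfin] at hp1D
    rw [Cfin, Finset.mem_filter]
    constructor
    · rw [mem_Dfin]
      constructor
      · intro x hx
        have hxv : x ≠ v := by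
          rintro rfl
          exact (Finset.mem_sdiff.1 hx).2 hvF
        show (if x ∈ S \ F then Function.update p.1 v p.2 x else 0) ∈ L x
        rw [if_pos hx, Function.update_of_ne hxv]
        exact hp1D.1 x (Finset.mem_erase.2 ⟨hxv, (Finset.mem_sdiff.1 hx).1⟩)
      · intro x hx
        show (if x ∈ S \ F then Function.update p.1 v p.2 x else 0) = 0
        rw [if_neg hx]
    · refine NRon_anti (f := p.1) ?_ ?_ hp1N
      · intro x hx
        rw [Finset.mem_sdiff] at hx
        refine Finset.mem_erase.2 ⟨?_, hx.1⟩
        rintro rfl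
        exact hx.2 hvF
      · intro x hx
        have hxv : x ≠ v := by
          rintro rfl
          exact (Finset.mem_sdiff.1 hx).2 hvF
        show (if x ∈ S \ F then Function.update p.1 v p.2 x else 0) = p.1 x
        rw [if_pos hx, Function.update_of_ne hxv]
  · -- injectivity
    intro p hp q hq hrpq
    simp only [Finset.coe_filter, Set.mem_setOf_eq, Finset.mem_coe, Finset.mem_product] at hp hq
    obtain ⟨⟨hp1, hp2⟩, hrepp⟩ := hp
    obtain ⟨⟨hq1, hq2⟩, hrepq⟩ := hq
    rw [Cfin, Finset.mem_filter, mem_Dfin] at hp1 hq1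
    have heq2 : ∀ y ∈ S \ F, Function.update p.1 v p.2 y = Function.update q.1 v q.2 y := by
      intro y hy
      have h := congrFun hrpq y
      simp only [hrdef] at h
      rwa [if_pos hy, if_pos hy] at h
    have hφeq : Function.update p.1 v p.2 = Function.update q.1 v q.2 := by
      funext x
      by_cases hx : x ∈ S \ F
      · exact heq2 x hx
      · by_cases hxF : x ∈ F
        · -- x in the first half: use the repetition
          rw [hFdef, List.mem_toFinset] at hxF
          obtain ⟨j, hj', hjeq⟩ := List.mem_iff_getElem.1 hxF
          have hj : j < t := by rw [hlt] at hj'; exact hj'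
          have hjlen : j < u.length := by omega
          have hjl : t + j < u.length := by omega
          rw [List.getElem_take] at hjeq
          subst hjeq
          have key : ∀ (φ : V → ℕ),
              (u.take t).map φ = (u.drop t).map φ → φ u[j] = φ (u[t+j]'hjl) := by
            intro φ hφ
            have h1 := List.getElem_of_eq hφ
              (show j < ((u.take t).map φ).length by rw [List.length_map, hlt]; exact hj)
            simp only [List.getElem_map, List.getElem_take, List.getElem_drop] at h1
            exact h1
          rw [key _ hrepp, key _ hrepq]
          exact heq2 _ (hsecond j hj hjl)
        · -- x outside S
          have hxS : x ∉ S := by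
            intro h
            exact hx (Finset.mem_sdiff.2 ⟨h, hxF⟩)
          have hxv : x ≠ v := by rintro rfl; exact hxS hv
          rw [Function.update_of_ne hxv, Function.update_of_ne hxv]
          rw [hp1.1.2 x (by simp [hxS]), hq1.1.2 x (by simp [hxS])]
    have hc2 : p.2 = q.2 := by
      have h := congrFun hφeq v
      rwa [Function.update_self, Function.update_self] at h
    have hc1 : p.1 = q.1 := by
      funext x
      by_cases hxv : x = v
      · subst hxv
        rw [hp1.1.2 x (by simp), hq1.1.2 x (by simp)]
      · have h := congrFun hφeq x
        rwa [Function.update_of_ne hxv, Function.update_of_ne hxv] at h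
    exact Prod.ext hc1 hc2

lemma series_le (N : ℕ) :
    ∑ t ∈ Finset.Icc 1 N, (t:ℝ) * (1/5:ℝ)^(t-1) ≤ 25/16 := by
  have hs : HasSum (fun n : ℕ => (n:ℝ) * (1/5)^n) ((1/5)/(1-1/5)^2) :=
    hasSum_coe_mul_geometric_of_norm_lt_one (by rw [Real.norm_eq_abs, abs_of_pos] <;> norm_num)
  calc ∑ t ∈ Finset.Icc 1 N, (t:ℝ) * (1/5:ℝ)^(t-1)
      = ∑ t ∈ Finset.Icc 1 N, 5 * ((t:ℝ) * (1/5:ℝ)^t) := by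
        refine Finset.sum_congr rfl fun t ht => ?_
        rw [Finset.mem_Icc] at ht
        have h1 : t - 1 + 1 = t := by omega
        calc (t:ℝ) * (1/5:ℝ)^(t-1) = 5 * ((t:ℝ) * ((1/5:ℝ)^(t-1) * (1/5))) := by ring
          _ = 5 * ((t:ℝ) * (1/5:ℝ)^t) := by rw [← pow_succ, h1]
    _ = 5 * ∑ t ∈ Finset.Icc 1 N, (t:ℝ) * (1/5:ℝ)^t := by rw [Finset.mul_sum]
    _ ≤ 5 * ((1/5)/(1-1/5)^2) := by
        refine mul_le_mul_of_nonneg_left ?_ (by norm_num)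
        refine le_trans (hs.summable.sum_le_tsum _ (fun i _ => by positivity)) ?_
        rw [hs.tsum_eq]
    _ = 25/16 := by norm_num

lemma numeric {D : ℝ} (hD : 2 ≤ D) {k : ℝ} (hk : 12.92*(D-1)^2 ≤ k) :
    5*(D-1)^2 + 25*D^2/(16*(D-1)) ≤ k := by
  have h1 : (0:ℝ) < D - 1 := by linarith
  have h2 : 25*D^2/(16*(D-1)) ≤ 7.92*(D-1)^2 := by
    rw [div_le_iff₀ (by linarith)]
    nlinarith [sq_nonneg (D-2), sq_nonneg D, mul_pos h1 h1, mul_pos (mul_pos h1 h1) h1]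
  nlinarith [h2, hk, sq_nonneg (D-1)]

lemma key_ind {G : SimpleGraph V} [DecidableRel G.Adj] (L : V → Finset ℕ)
    (hΔ : 2 ≤ G.maxDegree) (k : ℕ) (hL : ∀ w, k ≤ (L w).card)
    (hk : (12.92:ℝ)*((G.maxDegree:ℝ)-1)^2 ≤ (k:ℝ)) :
    ∀ n : ℕ, ∀ S : Finset V, S.card ≤ n → ∀ v ∈ S,
      5*(G.maxDegree-1)^2 * (Cfin G L (S.erase v)).card ≤ (Cfin G L S).card := by
  intro n
  induction n with
  | zero =>
    intro S hS v hv
    rw [Nat.le_zero, Finset.card_eq_zero] at hS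
    subst hS
    exact absurd hv (Finset.notMem_empty v)
  | succ n ih =>
    -- the iterated corollary for sets of size at most n
    have cor : ∀ T S : Finset V, S.card ≤ n → T ⊆ S →
        (5*(G.maxDegree-1)^2)^T.card * (Cfin G L (S \ T)).card ≤ (Cfin G L S).card := by
      intro T
      induction T using Finset.induction_on with
      | empty => intro S hS _; simp
      | @insert x T hx ihT =>
        intro S hS hsub
        have hxS : x ∈ S := hsub (Finset.mem_insert_self _ _)
        have hTsub : T ⊆ S.erase x := by
          intro y hy
          refine Finset.mem_erase.2 ⟨?_, hsub (Finset.mem_insert_of_mem hy)⟩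
          rintro rfl
          exact hx hy
        have hErase : S \ insert x T = (S.erase x) \ T := by
          ext a
          simp only [Finset.mem_sdiff, Finset.mem_erase, Finset.mem_insert]
          tauto
        calc (5*(G.maxDegree-1)^2)^(insert x T).card * (Cfin G L (S \ insert x T)).card
            = 5*(G.maxDegree-1)^2 *
              ((5*(G.maxDegree-1)^2)^T.card * (Cfin G L ((S.erase x) \ T)).card) := by
              rw [Finset.card_insert_of_notMem hx, hErase, pow_succ]
              ring
          _ ≤ 5*(G.maxDegree-1)^2 * (Cfin G L (S.erase x)).card :=
              Nat.mul_le_mul_left _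
                (ihT (S.erase x) (le_trans (Finset.card_le_card (Finset.erase_subset _ _)) hS)
                  hTsub)
          _ ≤ (Cfin G L S).card := ih S hS x hxS
    intro S hS v hv
    -- notation
    set Δ := G.maxDegree with hΔdef
    have hΔ1 : 1 ≤ Δ := by omega
    have hcast : ((Δ - 1 : ℕ) : ℝ) = (Δ : ℝ) - 1 := by push_cast [hΔ1]; ring
    have hΔr : (2:ℝ) ≤ (Δ:ℝ) := by exact_mod_cast hΔ
    set β : ℕ := 5*(Δ-1)^2 with hβdef
    have hβr : ((β:ℕ):ℝ) = 5*((Δ:ℝ)-1)^2 := by rw [hβdef]; push_cast [hcast]; ring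
    have hβpos : 0 < β := by
      rw [hβdef]
      have : 1 ≤ Δ - 1 := by omega
      positivity
    set m := (Cfin G L (S.erase v)).card with hmdef
    set Tset := (Cfin G L (S.erase v)) ×ˢ (L v) with hTdef
    -- each pair gives an admissible colouring of S
    have stepA : ∀ p ∈ Tset, Function.update p.1 v p.2 ∈ Dfin L S := by
      intro p hp
      rw [hTdef, Finset.mem_product] at hp
      obtain ⟨hp1, hp2⟩ := hp
      rw [Cfin, Finset.mem_filter, mem_Dfin] at hp1
      rw [mem_Dfin]
      constructor
      · intro x hx
        by_cases hxv : x = v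
        · subst hxv; rw [Function.update_self]; exact hp2
        · rw [Function.update_of_ne hxv]
          exact hp1.1.1 x (Finset.mem_erase.2 ⟨hxv, hx⟩)
      · intro x hx
        have hxv : x ≠ v := by rintro rfl; exact hx hv
        rw [Function.update_of_ne hxv]
        exact hp1.1.2 x (fun h => hx (Finset.mem_of_mem_erase h))
    set Good := Tset.filter (fun p => NRon G S (Function.update p.1 v p.2)) with hGdef
    set Bad := Tset.filter (fun p => ¬ NRon G S (Function.update p.1 v p.2)) with hBdef
    -- good extensions are counted by Cfin S
    have stepC : Good.card ≤ (Cfin G L S).card := by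
      refine Finset.card_le_card_of_injOn (fun p => Function.update p.1 v p.2) ?_ ?_
      · intro p hp
        rw [Finset.mem_coe] at hp ⊢
        rw [hGdef, Finset.mem_filter] at hp
        rw [Cfin, Finset.mem_filter]
        exact ⟨stepA p hp.1, hp.2⟩
      · intro p hp q hq hpq
        simp only [hGdef, Finset.coe_filter, Set.mem_setOf_eq] at hp hq
        have hp1 := hp.1
        have hq1 := hq.1
        rw [hTdef, Finset.mem_product, Cfin, Finset.mem_filter, mem_Dfin] at hp1 hq1
        have hc2 : p.2 = q.2 := by
          have h := congrFun hpq v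
          simp only at h
          rwa [Function.update_self, Function.update_self] at h
        have hc1 : p.1 = q.1 := by
          funext x
          by_cases hxv : x = v
          · subst hxv
            rw [hp1.1.1.2 x (by simp), hq1.1.1.2 x (by simp)]
          · have h := congrFun hpq x
            simp only at h
            rwa [Function.update_of_ne hxv, Function.update_of_ne hxv] at h
        exact Prod.ext hc1 hc2
    have stepD : Good.card + Bad.card = m * (L v).card := by
      rw [hGdef, hBdef, Finset.card_filter_add_card_filter_not, hTdef,
        Finset.card_product, hmdef]
    -- bad extensions are covered by the repetition skeletons
    have stepE : Bad ⊆ (Finset.Icc 1 S.card).biUnion fun t => (Pt G S v t).biUnion fun u =>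
        Tset.filter fun p =>
          (u.take t).map (Function.update p.1 v p.2) =
            (u.drop t).map (Function.update p.1 v p.2) := by
      intro p hp
      rw [hBdef, Finset.mem_filter] at hp
      obtain ⟨hpT, hpbad⟩ := hp
      have hp1 : p.1 ∈ Cfin G L (S.erase v) := by
        rw [hTdef, Finset.mem_product] at hpT
        exact hpT.1
      rw [Cfin, Finset.mem_filter] at hp1
      obtain ⟨t, ht1, ht2, u, hu, hrep⟩ :=
        exists_rep hp1.2 (fun x hx => Function.update_of_ne hx _ _) hpbad
      rw [Finset.mem_biUnion]
      refine ⟨t, Finset.mem_Icc.2 ⟨ht1, by omega⟩, ?_⟩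
      rw [Finset.mem_biUnion]
      exact ⟨u, hu, Finset.mem_filter.2 ⟨hpT, hrep⟩⟩
    -- counting the bad extensions, over the reals
    have hbadu : ∀ t ∈ Finset.Icc 1 S.card, ∀ u ∈ Pt G S v t,
        ((Tset.filter fun p =>
          (u.take t).map (Function.update p.1 v p.2) =
            (u.drop t).map (Function.update p.1 v p.2)).card : ℝ) ≤
          (m : ℝ) / (β:ℝ)^(t-1) := by
      intro t ht u hu
      rw [Finset.mem_Icc] at ht
      obtain ⟨hlen, hchain, hnodup, hsS, hvt⟩ := elems_Pt hu
      set F := (u.take t).toFinset with hFdef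
      have hvF : v ∈ F := List.mem_toFinset.2 hvt
      have hFS : F ⊆ S := fun x hx => hsS x (List.mem_of_mem_take (List.mem_toFinset.1 hx))
      have hcardF : F.card = t := by
        rw [hFdef, List.toFinset_card_of_nodup (hnodup.sublist (List.take_sublist _ _)),
          List.length_take]
        omega
      have h1 : ((Tset.filter fun p =>
          (u.take t).map (Function.update p.1 v p.2) =
            (u.drop t).map (Function.update p.1 v p.2)).card : ℕ) ≤
          (Cfin G L (S \ F)).card := card_badu_le hv ht.1 hu
      have hsdiff : S \ F = (S.erase v) \ (F.erase v) := by
        ext a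
        simp only [Finset.mem_sdiff, Finset.mem_erase]
        by_cases hav : a = v
        · subst hav; simp [hvF]
        · tauto
      have hFsub : F.erase v ⊆ S.erase v := fun x hx =>
        Finset.mem_erase.2 ⟨(Finset.mem_erase.1 hx).1, hFS (Finset.mem_of_mem_erase hx)⟩
      have hcard' : (S.erase v).card ≤ n := by
        rw [Finset.card_erase_of_mem hv]
        omega
      have h2 := cor (F.erase v) (S.erase v) hcard' hFsub
      rw [← hsdiff, Finset.card_erase_of_mem hvF, hcardF] at h2
      have h3 : (Cfin G L (S \ F)).card * β^(t-1) ≤ (Cfin G L (S.erase v)).card := by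
        rw [Nat.mul_comm]; exact h2
      -- h2 : β ^ (t - 1) * (Cfin G L (S \ F)).card ≤ m
      rw [le_div_iff₀ (by positivity)]
      calc ((Tset.filter fun p =>
          (u.take t).map (Function.update p.1 v p.2) =
            (u.drop t).map (Function.update p.1 v p.2)).card : ℝ) * (β:ℝ)^(t-1)
          ≤ ((Cfin G L (S \ F)).card : ℝ) * (β:ℝ)^(t-1) := by
            refine mul_le_mul_of_nonneg_right ?_ (by positivity)
            exact_mod_cast h1
        _ ≤ (m : ℝ) := by rw [hmdef]; exact_mod_cast h3
    -- total bad count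
    have stepG : ((Bad.card : ℝ)) ≤ (m:ℝ) * (25 * (Δ:ℝ)^2 / (16*((Δ:ℝ)-1))) := by
      have hΔ1r : (1:ℝ) ≤ (Δ:ℝ) - 1 := by linarith
      have hb : ((Bad.card : ℝ)) ≤ ∑ t ∈ Finset.Icc 1 S.card,
          ((Pt G S v t).card : ℝ) * ((m:ℝ) / (β:ℝ)^(t-1)) := by
        calc ((Bad.card : ℝ))
            ≤ (((Finset.Icc 1 S.card).biUnion fun t => (Pt G S v t).biUnion fun u =>
                Tset.filter fun p =>
                  (u.take t).map (Function.update p.1 v p.2) =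
                    (u.drop t).map (Function.update p.1 v p.2)).card : ℝ) := by
              exact_mod_cast Finset.card_le_card stepE
          _ ≤ ∑ t ∈ Finset.Icc 1 S.card, (((Pt G S v t).biUnion fun u =>
                Tset.filter fun p =>
                  (u.take t).map (Function.update p.1 v p.2) =
                    (u.drop t).map (Function.update p.1 v p.2)).card : ℝ) := by
              exact_mod_cast Finset.card_biUnion_le
          _ ≤ ∑ t ∈ Finset.Icc 1 S.card, ∑ u ∈ Pt G S v t,
                ((Tset.filter fun p =>
                  (u.take t).map (Function.update p.1 v p.2) =
                    (u.drop t).map (Function.update p.1 v p.2)).card : ℝ) := by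
              refine Finset.sum_le_sum fun t _ => ?_
              exact_mod_cast Finset.card_biUnion_le
          _ ≤ ∑ t ∈ Finset.Icc 1 S.card, ∑ u ∈ Pt G S v t, ((m:ℝ) / (β:ℝ)^(t-1)) := by
              refine Finset.sum_le_sum fun t ht => Finset.sum_le_sum fun u hu => ?_
              exact hbadu t ht u hu
          _ = ∑ t ∈ Finset.Icc 1 S.card, ((Pt G S v t).card : ℝ) * ((m:ℝ) / (β:ℝ)^(t-1)) := by
              refine Finset.sum_congr rfl fun t _ => ?_
              rw [Finset.sum_const, nsmul_eq_mul]
      have hterm : ∀ t ∈ Finset.Icc 1 S.card,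
          ((Pt G S v t).card : ℝ) * ((m:ℝ) / (β:ℝ)^(t-1)) ≤
            (m:ℝ) * ((Δ:ℝ)^2/((Δ:ℝ)-1)) * ((t:ℝ) * (1/5:ℝ)^(t-1)) := by
        intro t ht
        rw [Finset.mem_Icc] at ht
        have hptr := card_Pt_real (S := S) (v := v) ht.1 hΔ
        rw [← hΔdef] at hptr
        have hd1 : (0:ℝ) < (Δ:ℝ) - 1 := by linarith
        have hp1 : ((Pt G S v t).card : ℝ) ≤
            (t:ℝ) * (Δ:ℝ)^2 * (((Δ:ℝ)-1)^2)^(t-1) / ((Δ:ℝ)-1) := by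
          rw [le_div_iff₀ hd1]
          exact hptr
        have hβpow : ((β:ℝ))^(t-1) = 5^(t-1) * (((Δ:ℝ)-1)^2)^(t-1) := by
          rw [hβr, mul_pow]
        have hy : (0:ℝ) < (((Δ:ℝ)-1)^2)^(t-1) := by positivity
        calc ((Pt G S v t).card : ℝ) * ((m:ℝ) / (β:ℝ)^(t-1))
            ≤ ((t:ℝ) * (Δ:ℝ)^2 * (((Δ:ℝ)-1)^2)^(t-1) / ((Δ:ℝ)-1)) *
                ((m:ℝ) / (β:ℝ)^(t-1)) := by
              refine mul_le_mul_of_nonneg_right hp1 (by positivity)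
          _ = (m:ℝ) * ((Δ:ℝ)^2/((Δ:ℝ)-1)) * ((t:ℝ) * (1/5:ℝ)^(t-1)) := by
              rw [hβpow]
              rw [div_pow, one_pow]
              field_simp
      calc ((Bad.card : ℝ)) ≤ _ := hb
        _ ≤ ∑ t ∈ Finset.Icc 1 S.card,
              (m:ℝ) * ((Δ:ℝ)^2/((Δ:ℝ)-1)) * ((t:ℝ) * (1/5:ℝ)^(t-1)) :=
            Finset.sum_le_sum hterm
        _ = (m:ℝ) * ((Δ:ℝ)^2/((Δ:ℝ)-1)) *
              ∑ t ∈ Finset.Icc 1 S.card, ((t:ℝ) * (1/5:ℝ)^(t-1)) := by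
            rw [Finset.mul_sum]
        _ ≤ (m:ℝ) * ((Δ:ℝ)^2/((Δ:ℝ)-1)) * (25/16) := by
            refine mul_le_mul_of_nonneg_left (series_le _) (by positivity)
        _ = (m:ℝ) * (25 * (Δ:ℝ)^2 / (16*((Δ:ℝ)-1))) := by
            field_simp
    -- conclusion
    have hnum := numeric (D := (Δ:ℝ)) hΔr hk
    have hfinal : ((β:ℝ)) * (m:ℝ) ≤ ((Cfin G L S).card : ℝ) := by
      have hGoodR : ((Good.card : ℝ)) = (m:ℝ) * ((L v).card : ℝ) - (Bad.card : ℝ) := by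
        have hconv : ((Good.card : ℝ)) + (Bad.card : ℝ) = (m:ℝ) * ((L v).card : ℝ) := by
          exact_mod_cast stepD
        linarith
      have hkL : (k:ℝ) ≤ ((L v).card : ℝ) := by exact_mod_cast hL v
      have hmnn : (0:ℝ) ≤ (m:ℝ) := by positivity
      calc ((β:ℝ)) * (m:ℝ) = (m:ℝ) * (5*((Δ:ℝ)-1)^2) := by rw [hβr]; ring
        _ ≤ (m:ℝ) * ((k:ℝ) - 25 * (Δ:ℝ)^2 / (16*((Δ:ℝ)-1))) := by
            refine mul_le_mul_of_nonneg_left ?_ hmnn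
            linarith
        _ = (m:ℝ) * (k:ℝ) - (m:ℝ) * (25 * (Δ:ℝ)^2 / (16*((Δ:ℝ)-1))) := by ring
        _ ≤ (m:ℝ) * ((L v).card : ℝ) - (Bad.card : ℝ) := by
            have := mul_le_mul_of_nonneg_left hkL hmnn
            linarith
        _ = ((Good.card : ℝ)) := hGoodR.symm
        _ ≤ ((Cfin G L S).card : ℝ) := by exact_mod_cast stepC
    exact_mod_cast hfinal

lemma exists_coloring {G : SimpleGraph V} [DecidableRel G.Adj]
    (hΔ : 2 ≤ G.maxDegree) (k : ℕ)
    (hk : (12.92:ℝ)*((G.maxDegree:ℝ)-1)^2 ≤ (k:ℝ))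
    (L : V → Finset ℕ) (hL : ∀ w, k ≤ (L w).card) :
    ∃ φ : V → ℕ, (∀ v, φ v ∈ L v) ∧ Nonrepetitive G φ := by
  have key := key_ind L hΔ k hL hk
  have cor : ∀ T S : Finset V, T ⊆ S →
      (5*(G.maxDegree-1)^2)^T.card * (Cfin G L (S \ T)).card ≤ (Cfin G L S).card := by
    intro T
    induction T using Finset.induction_on with
    | empty => intro S _; simp
    | @insert x T hx ihT =>
      intro S hsub
      have hxS : x ∈ S := hsub (Finset.mem_insert_self _ _)
      have hTsub : T ⊆ S.erase x := by
        intro y hy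
        refine Finset.mem_erase.2 ⟨?_, hsub (Finset.mem_insert_of_mem hy)⟩
        rintro rfl
        exact hx hy
      have hErase : S \ insert x T = (S.erase x) \ T := by
        ext a
        simp only [Finset.mem_sdiff, Finset.mem_erase, Finset.mem_insert]
        tauto
      calc (5*(G.maxDegree-1)^2)^(insert x T).card * (Cfin G L (S \ insert x T)).card
          = 5*(G.maxDegree-1)^2 *
            ((5*(G.maxDegree-1)^2)^T.card * (Cfin G L ((S.erase x) \ T)).card) := by
            rw [Finset.card_insert_of_notMem hx, hErase, pow_succ]
            ring
        _ ≤ 5*(G.maxDegree-1)^2 * (Cfin G L (S.erase x)).card :=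
            Nat.mul_le_mul_left _ (ihT (S.erase x) hTsub)
        _ ≤ (Cfin G L S).card := key S.card S le_rfl x hxS
  have hpos : 0 < (Cfin G L (Finset.univ : Finset V)).card := by
    have h := cor Finset.univ Finset.univ (subset_refl _)
    rw [Finset.sdiff_self, card_Cfin_empty, Nat.mul_one] at h
    have hβ : 0 < 5*(G.maxDegree-1)^2 := by
      have : 1 ≤ G.maxDegree - 1 := by omega
      positivity
    calc 0 < (5*(G.maxDegree-1)^2)^(Finset.univ : Finset V).card := Nat.pow_pos hβ
      _ ≤ _ := h
  obtain ⟨φ, hφ⟩ := Finset.card_pos.1 hpos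
  rw [Cfin, Finset.mem_filter, mem_Dfin] at hφ
  refine ⟨φ, fun v => hφ.1.1 v (Finset.mem_univ v), ?_⟩
  intro a b p hp l hl
  exact hφ.2 p.support p.isChain_adj_support hp.support_nodup
    (fun x _ => Finset.mem_univ x) l hl

theorem thue_le_thueChoice_le_harant_jendrol {V : Type} [Fintype V]
    (G : SimpleGraph V) [DecidableRel G.Adj] (hΔ : 2 ≤ G.maxDegree) :
    thueNumber G ≤ thueChoiceNumber G ∧
    (thueChoiceNumber G : ℤ) ≤ ⌈(12.92 : ℝ) * ((G.maxDegree : ℝ) - 1) ^ 2⌉ := by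
  set x : ℝ := (12.92 : ℝ) * ((G.maxDegree : ℝ) - 1) ^ 2 with hxdef
  have hΔr : (2:ℝ) ≤ (G.maxDegree:ℝ) := by exact_mod_cast hΔ
  have hxnn : 0 ≤ x := by rw [hxdef]; nlinarith
  set k : ℕ := (⌈x⌉).toNat with hkdef
  have hck : ((k:ℕ):ℤ) = ⌈x⌉ := by rw [hkdef]; exact Int.toNat_of_nonneg (Int.ceil_nonneg hxnn)
  have hk : x ≤ (k:ℝ) := by
    have h1 := Int.le_ceil x
    have h2 : ((⌈x⌉ : ℤ) : ℝ) = ((k:ℕ):ℝ) := by exact_mod_cast hck.symm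
    linarith
  have hmem : k ∈ {k | ∀ L : V → Finset ℕ, (∀ v, k ≤ (L v).card) →
      ∃ φ : V → ℕ, (∀ v, φ v ∈ L v) ∧ Nonrepetitive G φ} := by
    intro L hL
    exact exists_coloring hΔ k hk L hL
  have hchoice_le : thueChoiceNumber G ≤ k := Nat.sInf_le hmem
  constructor
  · -- thueNumber ≤ thueChoiceNumber
    have hne : Set.Nonempty {k | ∀ L : V → Finset ℕ, (∀ v, k ≤ (L v).card) →
        ∃ φ : V → ℕ, (∀ v, φ v ∈ L v) ∧ Nonrepetitive G φ} := ⟨k, hmem⟩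
    have hKmem := Nat.sInf_mem hne
    set K := thueChoiceNumber G with hKdef
    obtain ⟨φ, hφL, hφN⟩ := hKmem (fun _ => Finset.range K) (fun v => by rw [Finset.card_range]; exact le_of_eq rfl)
    have hφK : ∀ v, φ v < K := fun v => Finset.mem_range.1 (hφL v)
    refine Nat.sInf_le ⟨fun v => ⟨φ v, hφK v⟩, ?_⟩
    intro a b p hp l hl hrep
    refine hφN p hp (l.map Fin.val) (by simpa using hl) ?_
    have : p.support.map φ = (p.support.map (fun v => (⟨φ v, hφK v⟩ : Fin K))).map Fin.val := by
      rw [List.map_map]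
      rfl
    rw [this, hrep, List.map_append]
  · rw [← hck]
    exact_mod_cast hchoice_le
end

section
/- For every finite simple graph G with maximum degree Δ > 1, π(G) ≤ π_ℓ(G) ≤ ⌈(1 + 1/(Δ^{1/3} − 1) + 1/Δ^{1/3})·Δ²⌉. -/
open SimpleGraph

namespace ThueAux
variable {V : Type} [Fintype V] [DecidableEq V] (G : SimpleGraph V)

/-- Nonrepetitive on a finite vertex subset, phrased with lists. -/
def NonrepOn (A : Finset V) (φ : V → ℕ) : Prop :=
  ∀ n, 0 < n → ∀ l : List V, l.length = 2*n → l.Chain' G.Adj → l.Nodup →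
    (∀ x ∈ l, x ∈ A) → (l.take n).map φ ≠ (l.drop n).map φ

open Classical in
/-- The finset of nonrepetitive colourings on `A` from lists `L`, zero outside `A`. -/
noncomputable def Fset (L : V → Finset ℕ) (A : Finset V) : Finset (V → ℕ) :=
  (Fintype.piFinset fun u => if u ∈ A then L u else {0}).filter fun φ => NonrepOn G A φ

variable {G}
set_option linter.unusedSectionVars false

lemma mem_Fset {L : V → Finset ℕ} {A : Finset V} {φ : V → ℕ} :
    φ ∈ Fset G L A ↔ ((∀ u ∈ A, φ u ∈ L u) ∧ ∀ u ∉ A, φ u = 0) ∧ NonrepOn G A φ := by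
  classical
  simp only [Fset, Finset.mem_filter, Fintype.mem_piFinset]
  constructor
  · rintro ⟨h1, h2⟩
    refine ⟨⟨fun u hu => ?_, fun u hu => ?_⟩, h2⟩
    · have := h1 u; rwa [if_pos hu] at this
    · have := h1 u; rwa [if_neg hu, Finset.mem_singleton] at this
  · rintro ⟨⟨h1, h2⟩, h3⟩
    refine ⟨fun u => ?_, h3⟩
    by_cases hu : u ∈ A
    · rw [if_pos hu]; exact h1 u hu
    · rw [if_neg hu, Finset.mem_singleton]; exact h2 u hu

lemma nonrepOn_mono {A B : Finset V} (hAB : A ⊆ B) {φ : V → ℕ} (h : NonrepOn G B φ) :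
    NonrepOn G A φ :=
  fun n hn l h1 h2 h3 h4 => h n hn l h1 h2 h3 (fun x hx => hAB (h4 x hx))

lemma nonrepOn_congr {A : Finset V} {φ ψ : V → ℕ} (hagree : ∀ x ∈ A, φ x = ψ x)
    (h : NonrepOn G A φ) : NonrepOn G A ψ := by
  intro n hn l h1 h2 h3 h4 heq
  refine h n hn l h1 h2 h3 h4 ?_
  have e1 : (l.take n).map φ = (l.take n).map ψ :=
    List.map_congr_left fun a ha => hagree a (h4 a (List.mem_of_mem_take ha))
  have e2 : (l.drop n).map φ = (l.drop n).map ψ :=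
    List.map_congr_left fun a ha => hagree a (h4 a (List.mem_of_mem_drop ha))
  rw [e1, e2, heq]

lemma empty_mem_Fset (L : V → Finset ℕ) : (fun _ => 0) ∈ Fset G L ∅ := by
  rw [mem_Fset]
  refine ⟨⟨fun u hu => absurd hu (by simp), fun u _ => rfl⟩, ?_⟩
  intro n hn l h1 _ _ h4 _
  have : l = [] := List.eq_nil_iff_forall_not_mem.2 fun x hx => by simpa using h4 x hx
  rw [this] at h1; simp at h1; omega

/-- Pointwise consequence of a repetition. -/
lemma rep_pointwise {φ : V → ℕ} {l : List V} {n : ℕ} (hl : l.length = 2*n)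
    (h : (l.take n).map φ = (l.drop n).map φ) (d : V) :
    ∀ i < n, φ (l.getD i d) = φ (l.getD (i+n) d) := by
  intro i hi
  have hi1 : i < l.length := by omega
  have hi2 : i + n < l.length := by omega
  have htl : (l.take n).length = n := by rw [List.length_take]; omega
  have hdl : (l.drop n).length = n := by rw [List.length_drop]; omega
  have key := List.getElem_of_eq h
    (show i < ((l.take n).map φ).length by rw [List.length_map, htl]; exact hi)
  simp only [List.getElem_map, List.getElem_take, List.getElem_drop] at key
  rw [List.getD_eq_getElem _ _ hi1, List.getD_eq_getElem _ _ hi2]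
  simp only [show n + i = i + n from Nat.add_comm n i] at key
  exact key



def allLists : ℕ → Finset (List V)
  | 0 => {[]}
  | m+1 => (Finset.univ ×ˢ allLists m).image fun p => p.1 :: p.2

lemma mem_allLists : ∀ {m : ℕ} {l : List V}, l ∈ allLists m ↔ l.length = m
  | 0, l => by
      constructor
      · intro h; simp [allLists] at h; simp [h]
      · intro h; rw [List.length_eq_zero_iff] at h; simp [allLists, h]
  | m+1, l => by
      constructor
      · intro h
        simp only [allLists, Finset.mem_image, Finset.mem_product] at h
        obtain ⟨⟨a, t⟩, ⟨-, ht⟩, rfl⟩ := h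
        simp [mem_allLists.1 ht]
      · intro h
        cases l with
        | nil => simp at h
        | cons a t =>
          simp only [allLists, Finset.mem_image, Finset.mem_product]
          exact ⟨(a, t), ⟨Finset.mem_univ _, mem_allLists.2 (by simpa using h)⟩, rfl⟩

lemma chain'_adj_getD (v : V) {l : List V} (h : l.Chain' G.Adj) {i : ℕ}
    (hi : i + 1 < l.length) : G.Adj (l.getD i v) (l.getD (i+1) v) := by
  rw [List.getD_eq_getElem _ _ (by omega), List.getD_eq_getElem _ _ hi]
  have := List.isChain_iff_getElem.1 h i (by omega)
  simpa [List.get_eq_getElem] using this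

lemma toList_indexOf_inj {s : Finset V} {a b : V} (ha : a ∈ s) (hb : b ∈ s)
    (h : s.toList.idxOf a = s.toList.idxOf b) : a = b := by
  have ha' := List.idxOf_lt_length_iff.2 (Finset.mem_toList.2 ha)
  have hb' := List.idxOf_lt_length_iff.2 (Finset.mem_toList.2 hb)
  have e1 := List.getElem_idxOf ha'
  have e2 := List.getElem_idxOf hb'
  rw [← e1, ← e2]
  congr 1

variable [Fintype V] [DecidableRel G.Adj]

open Classical in
lemma events_card_le (v : V) (m j : ℕ) (hjm : j < m) :
    ((allLists m).filter fun l => l.Chain' G.Adj ∧ l.getD j v = v).card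
      ≤ G.maxDegree ^ (m - 1) := by
  classical
  set Δ := G.maxDegree
  have htarget : (Fintype.piFinset fun _ : Fin (m-1) => Finset.range Δ).card = Δ ^ (m-1) := by
    rw [Fintype.card_piFinset]
    simp
  rw [← htarget]
  set enc : List V → (Fin (m-1) → ℕ) := fun l i =>
    if (i : ℕ) < j then ((G.neighborFinset (l.getD ((i:ℕ)+1) v)).toList).idxOf (l.getD i v)
    else ((G.neighborFinset (l.getD i v)).toList).idxOf (l.getD ((i:ℕ)+1) v) with henc
  apply Finset.card_le_card_of_injOn enc
  · -- maps into
    intro l hl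
    simp only [Finset.mem_coe, Finset.mem_filter, mem_allLists] at hl
    obtain ⟨hlen, hch, hjv⟩ := hl
    rw [Finset.mem_coe, Fintype.mem_piFinset]
    intro i
    rw [Finset.mem_range]
    have hi1 : (i : ℕ) + 1 < l.length := by have := i.2; omega
    have hadj := chain'_adj_getD v hch hi1
    by_cases hij : (i : ℕ) < j
    · have hmem : l.getD (i:ℕ) v ∈ G.neighborFinset (l.getD ((i:ℕ)+1) v) := by
        rw [mem_neighborFinset]; exact hadj.symm
      have := List.idxOf_lt_length_iff.2 (Finset.mem_toList.2 hmem)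
      rw [Finset.length_toList] at this
      simp only [henc, if_pos hij]
      exact lt_of_lt_of_le this (G.degree_le_maxDegree _)
    · have hmem : l.getD ((i:ℕ)+1) v ∈ G.neighborFinset (l.getD (i:ℕ) v) := by
        rw [mem_neighborFinset]; exact hadj
      have := List.idxOf_lt_length_iff.2 (Finset.mem_toList.2 hmem)
      rw [Finset.length_toList] at this
      simp only [henc, if_neg hij]
      exact lt_of_lt_of_le this (G.degree_le_maxDegree _)
  · -- injective
    intro l₁ hl₁ l₂ hl₂ he
    simp only [Finset.coe_filter, Set.mem_setOf_eq, mem_allLists] at hl₁ hl₂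
    obtain ⟨hlen₁, hch₁, hjv₁⟩ := hl₁
    obtain ⟨hlen₂, hch₂, hjv₂⟩ := hl₂
    have step_up : ∀ p, j ≤ p → p + 1 < m → l₁.getD p v = l₂.getD p v →
        l₁.getD (p+1) v = l₂.getD (p+1) v := by
      intro p hjp hpm hip
      have hp1 : p < m - 1 := by omega
      have he' := congrFun he ⟨p, hp1⟩
      simp only [henc, if_neg (by omega : ¬ p < j)] at he'
      rw [hip] at he'
      have h₁ : l₁.getD (p+1) v ∈ G.neighborFinset (l₂.getD p v) := by
        rw [mem_neighborFinset, ← hip]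
        exact chain'_adj_getD v hch₁ (by omega)
      have h₂ : l₂.getD (p+1) v ∈ G.neighborFinset (l₂.getD p v) := by
        rw [mem_neighborFinset]
        exact chain'_adj_getD v hch₂ (by omega)
      exact toList_indexOf_inj h₁ h₂ he'
    have step_down : ∀ p, p + 1 ≤ j → l₁.getD (p+1) v = l₂.getD (p+1) v →
        l₁.getD p v = l₂.getD p v := by
      intro p hpj hip
      have hp1 : p < m - 1 := by omega
      have he' := congrFun he ⟨p, hp1⟩
      simp only [henc, if_pos (by omega : p < j)] at he'
      rw [hip] at he'
      have h₁ : l₁.getD p v ∈ G.neighborFinset (l₂.getD (p+1) v) := by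
        rw [mem_neighborFinset, ← hip]
        exact (chain'_adj_getD v hch₁ (by omega)).symm
      have h₂ : l₂.getD p v ∈ G.neighborFinset (l₂.getD (p+1) v) := by
        rw [mem_neighborFinset]
        exact (chain'_adj_getD v hch₂ (by omega)).symm
      exact toList_indexOf_inj h₁ h₂ he'
    have up : ∀ t, j + t < m → l₁.getD (j+t) v = l₂.getD (j+t) v := by
      intro t
      induction t with
      | zero => intro _; simp only [Nat.add_zero]; rw [hjv₁, hjv₂]
      | succ t ih =>
        intro ht
        have := step_up (j+t) (by omega) (by omega) (ih (by omega))
        simpa [Nat.add_assoc] using this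
    have down : ∀ t, t ≤ j → l₁.getD (j-t) v = l₂.getD (j-t) v := by
      intro t
      induction t with
      | zero => intro _; simp only [Nat.sub_zero]; rw [hjv₁, hjv₂]
      | succ t ih =>
        intro ht
        have := step_down (j-(t+1)) (by omega) ?_
        · exact this
        · have : j - (t+1) + 1 = j - t := by omega
          rw [this]; exact ih (by omega)
    apply List.ext_getElem (by omega)
    intro i hi₁ hi₂
    rw [← List.getD_eq_getElem l₁ v hi₁, ← List.getD_eq_getElem l₂ v hi₂]
    rcases le_or_gt j i with hji | hij
    · have := up (i - j) (by omega)
      rwa [Nat.add_sub_cancel' hji] at this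
    · have := down (j - i) (by omega)
      rwa [Nat.sub_sub_self (by omega : i ≤ j)] at this



set_option maxHeartbeats 2000000 in
lemma rosenfeld_step [DecidableRel G.Adj] (L : V → Finset ℕ) (k : ℕ)
    (hk : ∀ u, k ≤ (L u).card) (γ : ℝ) (hγ : 1 ≤ γ)
    (hγk : γ + ∑ n ∈ Finset.Icc 1 (Fintype.card V),
        (n : ℝ) * (G.maxDegree : ℝ) ^ (2*n - 1) / γ ^ (n - 1) ≤ (k : ℝ)) :
    ∀ m (A : Finset V), A.card ≤ m → ∀ v ∈ A,
      γ * ((Fset G L (A.erase v)).card : ℝ) ≤ ((Fset G L A).card : ℝ) := by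
  classical
  have hγ0 : (0:ℝ) < γ := lt_of_lt_of_le one_pos hγ
  intro m
  induction m with
  | zero =>
    intro A hA v hv
    have : A = ∅ := Finset.card_eq_zero.1 (by omega)
    subst this; exact absurd hv (by simp)
  | succ m ih =>
    intro A hA v hv
    set M := Fintype.card V with hM
    set A' := A.erase v with hA'def
    have hvA' : v ∉ A' := Finset.notMem_erase v A
    have hA'sub : A' ⊆ A := Finset.erase_subset v A
    have hA'card : A'.card ≤ m := by
      have h1 : A'.card = A.card - 1 := Finset.card_erase_of_mem hv
      have h2 : 1 ≤ A.card := Finset.card_pos.2 ⟨v, hv⟩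
      omega
    -- iteration of the induction hypothesis
    have iterate : ∀ t (C D : Finset V), C.card ≤ m → D ⊆ C → C.card - D.card = t →
        γ ^ t * ((Fset G L D).card : ℝ) ≤ ((Fset G L C).card : ℝ) := by
      intro t
      induction t with
      | zero =>
        intro C D hC hDC h0
        have hcc : C.card ≤ D.card := by
          have := Finset.card_le_card hDC; omega
        have : D = C := Finset.eq_of_subset_of_card_le hDC hcc
        subst this; simp
      | succ t iht =>
        intro C D hC hDC hdiff
        have hlt : D.card < C.card := by
          have := Finset.card_le_card hDC; omega
        have hne : (C \ D).Nonempty := by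
          rw [Finset.sdiff_nonempty]
          intro hCD
          have := Finset.card_le_card hCD; omega
        obtain ⟨u, hu⟩ := hne
        have huC : u ∈ C := (Finset.mem_sdiff.1 hu).1
        have huD : u ∉ D := (Finset.mem_sdiff.1 hu).2
        have hDCe : D ⊆ C.erase u := fun x hx =>
          Finset.mem_erase.2 ⟨fun h => huD (h ▸ hx), hDC hx⟩
        have hCe : (C.erase u).card = C.card - 1 := Finset.card_erase_of_mem huC
        calc γ ^ (t+1) * ((Fset G L D).card : ℝ)
            = γ * (γ ^ t * ((Fset G L D).card : ℝ)) := by ring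
          _ ≤ γ * ((Fset G L (C.erase u)).card : ℝ) := by
              exact mul_le_mul_of_nonneg_left
                (iht (C.erase u) D (by omega) hDCe (by omega)) (le_of_lt hγ0)
          _ ≤ ((Fset G L C).card : ℝ) := ih C hC u huC
    -- the extension map
    set F' := Fset G L A' with hF'def
    set E : Finset ((V → ℕ) × ℕ) := F' ×ˢ L v with hEdef
    have hFv0 : ∀ ψ ∈ F', ψ v = 0 := fun ψ hψ => (mem_Fset.1 hψ).1.2 v hvA'
    have hextmem : ∀ p ∈ E, (∀ u ∈ A, Function.update p.1 v p.2 u ∈ L u) ∧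
        (∀ u ∉ A, Function.update p.1 v p.2 u = 0) := by
      rintro ⟨ψ, c⟩ hp
      rw [hEdef, Finset.mem_product] at hp
      obtain ⟨hψ, hc⟩ := hp
      obtain ⟨⟨hψ1, hψ2⟩, -⟩ := mem_Fset.1 hψ
      constructor
      · intro u hu
        by_cases huv : u = v
        · subst huv; simpa [Function.update_self] using hc
        · rw [Function.update_of_ne huv]
          exact hψ1 u (Finset.mem_erase.2 ⟨huv, hu⟩)
      · intro u hu
        have huv : u ≠ v := fun h => hu (h ▸ hv)
        rw [Function.update_of_ne huv]
        exact hψ2 u (fun h => hu (hA'sub h))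
    have hinj : Set.InjOn (fun p : (V → ℕ) × ℕ => Function.update p.1 v p.2) ↑E := by
      rintro ⟨ψ, c⟩ hp ⟨ψ', c'⟩ hq h
      have hp' := Finset.mem_product.1 (Finset.mem_coe.1 hp)
      have hq' := Finset.mem_product.1 (Finset.mem_coe.1 hq)
      have hc : c = c' := by
        have := congrFun h v
        simpa [Function.update_self] using this
      have hψ : ψ = ψ' := by
        funext u
        by_cases huv : u = v
        · subst huv
          rw [hFv0 ψ hp'.1, hFv0 ψ' hq'.1]
        · have := congrFun h u
          simpa [Function.update_of_ne huv] using this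
      simp [hc, hψ]
    set good := E.filter (fun p => NonrepOn G A (Function.update p.1 v p.2)) with hgooddef
    set bad := E.filter (fun p => ¬ NonrepOn G A (Function.update p.1 v p.2)) with hbaddef
    have hgb : good.card + bad.card = E.card :=
      Finset.card_filter_add_card_filter_not _
    have hEcard : E.card = F'.card * (L v).card := by
      rw [hEdef]; exact Finset.card_product _ _
    have hgood_le : good.card ≤ (Fset G L A).card := by
      apply Finset.card_le_card_of_injOn (fun p => Function.update p.1 v p.2)
      · intro p hp
        rw [Finset.mem_coe, hgooddef, Finset.mem_filter] at hp
        exact mem_Fset.2 ⟨hextmem p hp.1, hp.2⟩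
      · exact hinj.mono (by rw [hgooddef]; exact_mod_cast Finset.filter_subset _ _)
    -- events and bad sets
    set events : ℕ → ℕ → Finset (List V) := fun n j =>
      (allLists (2*n)).filter (fun l => l.Chain' G.Adj ∧ l.getD j v = v ∧ l.Nodup ∧
        ∀ x ∈ l, x ∈ A) with heventsdef
    set BadSet : ℕ → ℕ → List V → Finset ((V → ℕ) × ℕ) := fun n j l =>
      E.filter (fun p => p.2 = p.1 (l.getD (j+n) v) ∧
        ∀ i, i < n → i ≠ j → p.1 (l.getD i v) = p.1 (l.getD (i+n) v)) with hBadSetdef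
    set T : Finset ((_ : ℕ) × ℕ) := (Finset.Icc 1 M).sigma (fun n => Finset.range n)
      with hTdef
    -- covering
    have hcover : bad ⊆ T.biUnion (fun nj =>
        (events nj.1 nj.2).biUnion (fun l => BadSet nj.1 nj.2 l)) := by
      rintro ⟨ψ, c⟩ hp
      rw [hbaddef, Finset.mem_filter] at hp
      obtain ⟨hpE, hbadp⟩ := hp
      have hpE' := hpE
      rw [hEdef, Finset.mem_product] at hpE'
      obtain ⟨hψF, hcL⟩ := hpE'
      set φ' := Function.update ψ v c with hφ'def
      have hψnr : NonrepOn G A' ψ := (mem_Fset.1 hψF).2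
      unfold NonrepOn at hbadp
      push_neg at hbadp
      obtain ⟨n, hn, l, hlen, hch, hnd, hmemA, hrep⟩ := hbadp
      have hφ'ψ : ∀ x : V, x ≠ v → φ' x = ψ x := fun x hx => Function.update_of_ne hx c ψ
      have hvl : v ∈ l := by
        by_contra hvnl
        apply hψnr n hn l hlen hch hnd
          (fun x hx => Finset.mem_erase.2 ⟨fun h => hvnl (h ▸ hx), hmemA x hx⟩)
        have e1 : (l.take n).map ψ = (l.take n).map φ' :=
          List.map_congr_left fun a ha =>
            (hφ'ψ a (fun h => hvnl (h ▸ List.mem_of_mem_take ha))).symm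
        have e2 : (l.drop n).map ψ = (l.drop n).map φ' :=
          List.map_congr_left fun a ha =>
            (hφ'ψ a (fun h => hvnl (h ▸ List.mem_of_mem_drop ha))).symm
        rw [e1, e2]; exact hrep
      have hpt := rep_pointwise hlen hrep v
      set p₀ := l.idxOf v with hp₀def
      have hp₀len : p₀ < l.length := List.idxOf_lt_length_iff.2 hvl
      have hp₀ : l.getD p₀ v = v := by
        rw [List.getD_eq_getElem _ _ hp₀len]
        exact List.getElem_idxOf hp₀len
      have key : ∃ (l' : List V) (j : ℕ), l'.length = 2*n ∧ l'.Chain' G.Adj ∧ l'.Nodup ∧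
          (∀ x ∈ l', x ∈ A) ∧ j < n ∧ l'.getD j v = v ∧
          ∀ i, i < n → φ' (l'.getD i v) = φ' (l'.getD (i+n) v) := by
        rcases lt_or_ge p₀ n with h | h
        · exact ⟨l, p₀, hlen, hch, hnd, hmemA, h, hp₀, hpt⟩
        · have hrev : ∀ i, i < 2*n → l.reverse.getD i v = l.getD (2*n-1-i) v := by
            intro i hi
            rw [List.getD_eq_getElem _ _ (by rw [List.length_reverse]; omega),
              List.getD_eq_getElem _ _ (by omega), List.getElem_reverse]
            have : l.length - 1 - i = 2*n - 1 - i := by omega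
            simp only [this]
          refine ⟨l.reverse, 2*n-1-p₀, by simpa using hlen,
            List.isChain_reverse.2 (List.IsChain.imp (fun a b hab => hab.symm) hch),
            List.nodup_reverse.2 hnd, fun x hx => hmemA x (List.mem_reverse.1 hx),
            by omega, ?_, ?_⟩
          · rw [hrev _ (by omega)]
            have : 2*n - 1 - (2*n - 1 - p₀) = p₀ := by omega
            rw [this]; exact hp₀
          · intro i hi
            rw [hrev i (by omega), hrev (i+n) (by omega)]
            have e1 : 2*n - 1 - (i+n) = n - 1 - i := by omega
            have e2 : (n - 1 - i) + n = 2*n - 1 - i := by omega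
            have := hpt (n - 1 - i) (by omega)
            rw [e2] at this
            rw [e1]
            exact this.symm
      obtain ⟨l', j, hlen', hch', hnd', hmem', hjn, hjv', hpt'⟩ := key
      have hidx : ∀ i₁ i₂, i₁ < 2*n → i₂ < 2*n → l'.getD i₁ v = l'.getD i₂ v → i₁ = i₂ := by
        intro i₁ i₂ h₁ h₂ hh
        rw [List.getD_eq_getElem _ _ (by omega), List.getD_eq_getElem _ _ (by omega)] at hh
        exact (hnd'.getElem_inj_iff).1 hh
      rw [Finset.mem_biUnion]
      refine ⟨⟨n, j⟩, ?_, ?_⟩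
      · have h2n : 2*n ≤ M := by
          rw [hM, ← hlen']; exact hnd'.length_le_card
        rw [hTdef, Finset.mem_sigma]
        exact ⟨Finset.mem_Icc.2 (show 1 ≤ n ∧ n ≤ M from ⟨hn, by omega⟩),
          Finset.mem_range.2 hjn⟩
      rw [Finset.mem_biUnion]
      refine ⟨l', ?_, ?_⟩
      · rw [heventsdef]
        simp only [Finset.mem_filter, mem_allLists]
        exact ⟨hlen', hch', hjv', hnd', hmem'⟩
      · rw [hBadSetdef]
        simp only [Finset.mem_filter]
        have hjnv : l'.getD (j+n) v ≠ v := by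
          intro hcon
          have := hidx (j+n) j (by omega) (by omega) (hcon.trans hjv'.symm)
          omega
      -- c = ψ (l'.getD (j+n) v)
        have hcval : c = ψ (l'.getD (j+n) v) := by
          have h1 : φ' v = c := Function.update_self v c ψ
          have h2 := hpt' j hjn
          rw [hjv'] at h2
          rw [← hφ'ψ _ hjnv, ← h2, h1]
        refine ⟨hpE, hcval, ?_⟩
        intro i hi hij
        have hiv : l'.getD i v ≠ v := by
          intro hcon
          exact hij (hidx i j (by omega) (by omega) (hcon.trans hjv'.symm))
        have hinv : l'.getD (i+n) v ≠ v := by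
          intro hcon
          have := hidx (i+n) j (by omega) (by omega) (hcon.trans hjv'.symm)
          omega
        rw [← hφ'ψ _ hiv, ← hφ'ψ _ hinv]
        exact hpt' i hi
    -- per-event bound
    have hper : ∀ n, 1 ≤ n → n ≤ M → ∀ j, j < n → ∀ l ∈ events n j,
        ((BadSet n j l).card : ℝ) * γ ^ (n-1) ≤ (F'.card : ℝ) := by
      intro n hn1 hnM j hjn l hl
      rw [heventsdef] at hl
      simp only [Finset.mem_filter, mem_allLists] at hl
      obtain ⟨hlen, hch, hjv, hnd, hmemA⟩ := hl
      have hidx : ∀ i₁ i₂, i₁ < 2*n → i₂ < 2*n → l.getD i₁ v = l.getD i₂ v → i₁ = i₂ := by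
        intro i₁ i₂ h₁ h₂ hh
        rw [List.getD_eq_getElem _ _ (by omega), List.getD_eq_getElem _ _ (by omega)] at hh
        exact (hnd.getElem_inj_iff).1 hh
      have hgetmem : ∀ i, i < 2*n → l.getD i v ∈ l := by
        intro i hi
        rw [List.getD_eq_getElem _ _ (by omega)]
        exact List.getElem_mem _
      set S : Finset V := ((Finset.range n).erase j).image (fun i => l.getD (i+n) v)
        with hSdef
      have hSsub : S ⊆ A' := by
        intro x hx
        rw [hSdef, Finset.mem_image] at hx
        obtain ⟨i, hi, rfl⟩ := hx
        have hi' := Finset.mem_erase.1 hi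
        have hin : i < n := Finset.mem_range.1 hi'.2
        refine Finset.mem_erase.2 ⟨?_, hmemA _ (hgetmem _ (by omega))⟩
        intro hcon
        have := hidx (i+n) j (by omega) (by omega) (hcon.trans hjv.symm)
        omega
      have hScard : S.card = n - 1 := by
        rw [hSdef, Finset.card_image_of_injOn, Finset.card_erase_of_mem
          (Finset.mem_range.2 hjn), Finset.card_range]
        intro i₁ h₁ i₂ h₂ hh
        simp only [Finset.coe_erase, Set.mem_diff, Finset.coe_range, Set.mem_Iio] at h₁ h₂
        have := hidx (i₁+n) (i₂+n) (by omega) (by omega) hh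
        omega
      set B := A' \ S with hBdef
      have hBsub : B ⊆ A' := Finset.sdiff_subset
      have hBcard : A'.card - B.card = n - 1 := by
        rw [hBdef, Finset.card_sdiff_of_subset hSsub]
        have := Finset.card_le_card hSsub
        omega
      -- step 1 : BadSet into constrained colourings
      set Tset := F'.filter (fun ψ => ∀ i, i < n → i ≠ j →
        ψ (l.getD i v) = ψ (l.getD (i+n) v)) with hTsetdef
      have hstep1 : (BadSet n j l).card ≤ Tset.card := by
        apply Finset.card_le_card_of_injOn Prod.fst
        · rintro ⟨ψ, c⟩ hp
          rw [hBadSetdef] at hp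
          simp only [Finset.mem_coe, Finset.mem_filter] at hp
          obtain ⟨hpE, -, hcon⟩ := hp
          rw [hEdef, Finset.mem_product] at hpE
          rw [Finset.mem_coe, hTsetdef, Finset.mem_filter]
          exact ⟨hpE.1, hcon⟩
        · rintro ⟨ψ, c⟩ hp ⟨ψ', c'⟩ hq h
          simp only [hBadSetdef, Finset.coe_filter, Set.mem_setOf_eq] at hp hq
          simp only at h
          subst h
          rw [Prod.mk.injEq]
          exact ⟨rfl, by rw [hp.2.1, hq.2.1]⟩
      -- step 2 : constrained colourings into Fset B
      have hstep2 : Tset.card ≤ (Fset G L B).card := by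
        set proj : (V → ℕ) → (V → ℕ) := fun ψ u => if u ∈ S then 0 else ψ u with hprojdef
        apply Finset.card_le_card_of_injOn proj
        · intro ψ hψ
          rw [Finset.mem_coe, hTsetdef, Finset.mem_filter] at hψ
          obtain ⟨hψF, hcon⟩ := hψ
          obtain ⟨⟨hψ1, hψ2⟩, hψnr⟩ := mem_Fset.1 hψF
          refine mem_Fset.2 ⟨⟨?_, ?_⟩, ?_⟩
          · intro u hu
            have huS : u ∉ S := (Finset.mem_sdiff.1 hu).2
            rw [hprojdef]; simp only [if_neg huS]
            exact hψ1 u (Finset.mem_sdiff.1 hu).1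
          · intro u hu
            by_cases huS : u ∈ S
            · rw [hprojdef]; simp only [if_pos huS]
            · rw [hprojdef]; simp only [if_neg huS]
              exact hψ2 u (fun h => hu (Finset.mem_sdiff.2 ⟨h, huS⟩))
          · refine nonrepOn_congr (fun x hx => ?_) (nonrepOn_mono hBsub hψnr)
            have hxS : x ∉ S := (Finset.mem_sdiff.1 hx).2
            rw [hprojdef]; simp only [if_neg hxS]
        · intro ψ₁ hψ₁ ψ₂ hψ₂ hh
          simp only [hTsetdef, Finset.coe_filter, Set.mem_setOf_eq] at hψ₁ hψ₂
          funext u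
          by_cases huS : u ∈ S
          · rw [hSdef, Finset.mem_image] at huS
            obtain ⟨i, hi, rfl⟩ := huS
            have hi' := Finset.mem_erase.1 hi
            have hin : i < n := Finset.mem_range.1 hi'.2
            have hfirst : l.getD i v ∉ S := by
              intro hcon
              rw [hSdef, Finset.mem_image] at hcon
              obtain ⟨i', hi'', he⟩ := hcon
              have : i = i' + n := hidx i (i'+n)
                (by omega) (by have := Finset.mem_range.1 (Finset.mem_erase.1 hi'').2; omega)
                he.symm
              have := Finset.mem_range.1 (Finset.mem_erase.1 hi'').2
              omega
            have e1 : ψ₁ (l.getD (i+n) v) = ψ₁ (l.getD i v) := (hψ₁.2 i hin hi'.1).symm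
            have e2 : ψ₂ (l.getD (i+n) v) = ψ₂ (l.getD i v) := (hψ₂.2 i hin hi'.1).symm
            have := congrFun hh (l.getD i v)
            rw [hprojdef] at this
            simp only [if_neg hfirst] at this
            rw [e1, e2, this]
          · have := congrFun hh u
            rw [hprojdef] at this
            simpa [if_neg huS] using this
      -- step 3 : iterate
      have hstep3 : γ ^ (n-1) * ((Fset G L B).card : ℝ) ≤ (F'.card : ℝ) := by
        rw [hF'def]
        exact iterate (n-1) A' B hA'card hBsub hBcard
      calc ((BadSet n j l).card : ℝ) * γ ^ (n-1)
          ≤ ((Fset G L B).card : ℝ) * γ ^ (n-1) := by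
            apply mul_le_mul_of_nonneg_right _ (by positivity)
            exact_mod_cast le_trans hstep1 hstep2
        _ = γ ^ (n-1) * ((Fset G L B).card : ℝ) := by ring
        _ ≤ (F'.card : ℝ) := hstep3
    -- counting
    have hΔcount : ∀ n, 1 ≤ n → ∀ j, j < n →
        ((events n j).card : ℝ) ≤ ((G.maxDegree : ℝ)) ^ (2*n - 1) := by
      intro n hn j hj
      have hsub : events n j ⊆ (allLists (2*n)).filter
          (fun l => l.Chain' G.Adj ∧ l.getD j v = v) := by
        intro l hl
        rw [heventsdef] at hl
        simp only [Finset.mem_filter] at hl ⊢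
        exact ⟨hl.1, hl.2.1, hl.2.2.1⟩
      have := le_trans (Finset.card_le_card hsub) (events_card_le v (2*n) j (by omega))
      calc ((events n j).card : ℝ) ≤ ((G.maxDegree ^ (2*n - 1) : ℕ) : ℝ) := by exact_mod_cast this
        _ = ((G.maxDegree : ℝ)) ^ (2*n - 1) := by push_cast; ring
    -- put everything together
    have hbadcard : (bad.card : ℝ) ≤ (∑ n ∈ Finset.Icc 1 M,
        (n : ℝ) * (G.maxDegree : ℝ) ^ (2*n - 1) / γ ^ (n - 1)) * (F'.card : ℝ) := by
      have h1 : bad.card ≤ ∑ nj ∈ T, ∑ l ∈ events nj.1 nj.2, (BadSet nj.1 nj.2 l).card := by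
        calc bad.card ≤ (T.biUnion (fun nj =>
              (events nj.1 nj.2).biUnion (fun l => BadSet nj.1 nj.2 l))).card :=
            Finset.card_le_card hcover
          _ ≤ ∑ nj ∈ T, ((events nj.1 nj.2).biUnion (fun l => BadSet nj.1 nj.2 l)).card :=
            Finset.card_biUnion_le
          _ ≤ ∑ nj ∈ T, ∑ l ∈ events nj.1 nj.2, (BadSet nj.1 nj.2 l).card := by
            apply Finset.sum_le_sum
            intro nj _
            exact Finset.card_biUnion_le
      have h2 : ((∑ nj ∈ T, ∑ l ∈ events nj.1 nj.2, (BadSet nj.1 nj.2 l).card : ℕ) : ℝ)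
          ≤ ∑ n ∈ Finset.Icc 1 M, (n : ℝ) *
            ((G.maxDegree : ℝ) ^ (2*n - 1) * ((F'.card : ℝ) / γ ^ (n-1))) := by
        push_cast
        rw [hTdef, Finset.sum_sigma]
        apply Finset.sum_le_sum
        intro n hn
        have hn1 : 1 ≤ n := (Finset.mem_Icc.1 hn).1
        have hnM : n ≤ M := (Finset.mem_Icc.1 hn).2
        calc ∑ j ∈ Finset.range n, ∑ l ∈ events n j, ((BadSet n j l).card : ℝ)
            ≤ ∑ j ∈ Finset.range n, ((G.maxDegree : ℝ) ^ (2*n - 1) * ((F'.card : ℝ) / γ ^ (n-1))) := by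
              apply Finset.sum_le_sum
              intro j hj
              have hjn : j < n := Finset.mem_range.1 hj
              calc ∑ l ∈ events n j, ((BadSet n j l).card : ℝ)
                  ≤ ∑ _l ∈ events n j, ((F'.card : ℝ) / γ ^ (n-1)) := by
                    apply Finset.sum_le_sum
                    intro l hl
                    rw [le_div_iff₀ (by positivity : (0:ℝ) < γ ^ (n-1))]
                    exact hper n hn1 hnM j hjn l hl
                _ = ((events n j).card : ℝ) * ((F'.card : ℝ) / γ ^ (n-1)) := by
                    rw [Finset.sum_const, nsmul_eq_mul]
                _ ≤ (G.maxDegree : ℝ) ^ (2*n - 1) * ((F'.card : ℝ) / γ ^ (n-1)) := by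
                    apply mul_le_mul_of_nonneg_right (hΔcount n hn1 j hjn) (by positivity)
          _ = (n : ℝ) * ((G.maxDegree : ℝ) ^ (2*n - 1) * ((F'.card : ℝ) / γ ^ (n-1))) := by
              rw [Finset.sum_const, Finset.card_range, nsmul_eq_mul]
      calc (bad.card : ℝ) ≤ ((∑ nj ∈ T, ∑ l ∈ events nj.1 nj.2, (BadSet nj.1 nj.2 l).card : ℕ) : ℝ) := by
            exact_mod_cast h1
        _ ≤ ∑ n ∈ Finset.Icc 1 M, (n : ℝ) *
            ((G.maxDegree : ℝ) ^ (2*n - 1) * ((F'.card : ℝ) / γ ^ (n-1))) := h2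
        _ = (∑ n ∈ Finset.Icc 1 M,
            (n : ℝ) * (G.maxDegree : ℝ) ^ (2*n - 1) / γ ^ (n - 1)) * (F'.card : ℝ) := by
            rw [Finset.sum_mul]
            apply Finset.sum_congr rfl
            intro n _
            field_simp
    -- conclude
    have hgoodR : ((Fset G L A).card : ℝ) ≥ (k : ℝ) * (F'.card : ℝ) - (bad.card : ℝ) := by
      have hE : (E.card : ℝ) = (F'.card : ℝ) * ((L v).card : ℝ) := by
        rw [hEcard]; push_cast; ring
      have hkL : (k : ℝ) ≤ ((L v).card : ℝ) := by exact_mod_cast hk v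
      have h1 : (good.card : ℝ) = (E.card : ℝ) - (bad.card : ℝ) := by
        have := hgb; push_cast [← this]; ring
      have h2 : ((Fset G L A).card : ℝ) ≥ (good.card : ℝ) := by exact_mod_cast hgood_le
      have h3 : (k : ℝ) * (F'.card : ℝ) ≤ (E.card : ℝ) := by
        rw [hE]
        calc (k : ℝ) * (F'.card : ℝ) = (F'.card : ℝ) * (k : ℝ) := by ring
          _ ≤ (F'.card : ℝ) * ((L v).card : ℝ) :=
            mul_le_mul_of_nonneg_left hkL (by positivity)
      linarith
    have hfin : γ * (F'.card : ℝ) ≤ ((Fset G L A).card : ℝ) := by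
      have hF'0 : (0:ℝ) ≤ (F'.card : ℝ) := by positivity
      nlinarith [hγk, hbadcard, hgoodR, mul_le_mul_of_nonneg_right hγk hF'0]
    exact hfin

lemma one_le_card_Fset [DecidableRel G.Adj] (L : V → Finset ℕ) (k : ℕ)
    (hk : ∀ u, k ≤ (L u).card) (γ : ℝ) (hγ : 1 ≤ γ)
    (hγk : γ + ∑ n ∈ Finset.Icc 1 (Fintype.card V),
        (n : ℝ) * (G.maxDegree : ℝ) ^ (2*n - 1) / γ ^ (n - 1) ≤ (k : ℝ)) :
    ∀ A : Finset V, 1 ≤ (Fset G L A).card := by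
  intro A
  induction A using Finset.strongInduction with
  | _ A ih =>
    rcases A.eq_empty_or_nonempty with rfl | ⟨v, hv⟩
    · exact Finset.card_pos.2 ⟨_, empty_mem_Fset L⟩
    · have h := rosenfeld_step L k hk γ hγ hγk A.card A le_rfl v hv
      have h2 : (1:ℝ) ≤ ((Fset G L (A.erase v)).card : ℝ) := by
        exact_mod_cast ih (A.erase v) (Finset.erase_ssubset hv)
      have h3 : (1:ℝ) ≤ ((Fset G L A).card : ℝ) := le_trans (by nlinarith) h
      exact_mod_cast h3

lemma nonrep_of_nonrepOn {φ : V → ℕ} (h : NonrepOn G Finset.univ φ) :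
    Nonrepetitive G φ := by
  intro u w p hp l hl heq
  have hn : 0 < l.length := List.length_pos_iff.2 hl
  have hslen : p.support.length = 2 * l.length := by
    have := congrArg List.length heq
    rw [List.length_map, List.length_append] at this
    omega
  refine h l.length hn p.support hslen p.isChain_adj_support hp.support_nodup
    (by simp) ?_
  have h1 : (p.support.take l.length).map φ = l := by
    rw [List.map_take, heq, List.take_left]
  have h2 : (p.support.drop l.length).map φ = l := by
    rw [List.map_drop, heq, List.drop_left]
  rw [h1, h2]

lemma analytic (Δ : ℕ) (hΔ : 2 ≤ Δ) (M : ℕ) :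
    1 ≤ (1 + 1/((Δ:ℝ) ^ ((1:ℝ)/3) - 1)) * (Δ:ℝ)^2 ∧
    (1 + 1/((Δ:ℝ) ^ ((1:ℝ)/3) - 1)) * (Δ:ℝ)^2
      + ∑ n ∈ Finset.Icc 1 M, (n:ℝ) * (Δ:ℝ)^(2*n-1)
          / ((1 + 1/((Δ:ℝ) ^ ((1:ℝ)/3) - 1)) * (Δ:ℝ)^2) ^ (n-1)
      ≤ (1 + 1/((Δ:ℝ)^((1:ℝ)/3) - 1) + 1/((Δ:ℝ)^((1:ℝ)/3))) * (Δ:ℝ)^2 := by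
  have hΔR : (2:ℝ) ≤ (Δ:ℝ) := by exact_mod_cast hΔ
  have hΔ0 : (0:ℝ) < (Δ:ℝ) := by linarith
  set s : ℝ := (Δ:ℝ) ^ ((1:ℝ)/3) with hsdef
  have hs1 : 1 < s := by
    rw [hsdef]
    calc (1:ℝ) = 1 ^ ((1:ℝ)/3) := by simp
    _ < (Δ:ℝ) ^ ((1:ℝ)/3) := by
        apply Real.rpow_lt_rpow (by norm_num) (by linarith) (by norm_num)
  have hs0 : 0 < s := by linarith
  have hsm1 : 0 < s - 1 := by linarith
  have hs3 : s ^ 3 = (Δ:ℝ) := by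
    rw [hsdef, ← Real.rpow_natCast ((Δ:ℝ) ^ ((1:ℝ)/3)) 3, ← Real.rpow_mul (le_of_lt hΔ0)]
    norm_num
  set γ : ℝ := (1 + 1/(s-1)) * (Δ:ℝ)^2 with hγdef
  have hγ1 : 1 ≤ γ := by
    rw [hγdef]
    have h1 : (1:ℝ) < 1 + 1/(s-1) := by
      have : 0 < 1/(s-1) := by positivity
      linarith
    nlinarith
  have hγ0 : (0:ℝ) < γ := by linarith
  refine ⟨hγ1, ?_⟩
  set r : ℝ := (s-1)/s with hrdef
  have hr0 : 0 ≤ r := by positivity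
  have hr1 : r < 1 := by
    rw [hrdef, div_lt_one hs0]; linarith
  have hsum := hasSum_coe_mul_geometric_of_norm_lt_one
    (𝕜 := ℝ) (r := r) (by rw [Real.norm_eq_abs, abs_of_nonneg hr0]; exact hr1)
  have hpartial : ∑ n ∈ Finset.Icc 1 M, (n:ℝ) * r^n ≤ r/(1-r)^2 :=
    sum_le_hasSum _ (fun i _ => by positivity) hsum
  have hrval : r = (Δ:ℝ)^2 / γ := by
    rw [hrdef, hγdef]
    field_simp
    ring
  have htermeq : ∀ n ∈ Finset.Icc 1 M,
      (n:ℝ) * (Δ:ℝ)^(2*n-1) / γ^(n-1) = (γ/(Δ:ℝ)) * ((n:ℝ) * r^n) := by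
    intro n hn
    have hn1 : 1 ≤ n := (Finset.mem_Icc.1 hn).1
    obtain ⟨b, rfl⟩ : ∃ b, n = b + 1 := ⟨n-1, by omega⟩
    rw [hrval]
    rw [show 2*(b+1)-1 = 2*b+1 from by omega, show (b+1)-1 = b from by omega]
    rw [div_pow, ← pow_mul]
    rw [show 2*(b+1) = (2*b+1)+1 from by omega]
    have hγb : γ ^ b ≠ 0 := by positivity
    have hγb1 : γ ^ (b+1) ≠ 0 := by positivity
    field_simp
    ring
  have hsum2 : ∑ n ∈ Finset.Icc 1 M, (n:ℝ) * (Δ:ℝ)^(2*n-1) / γ^(n-1)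
      ≤ (γ/(Δ:ℝ)) * (r/(1-r)^2) := by
    rw [Finset.sum_congr rfl htermeq, ← Finset.mul_sum]
    apply mul_le_mul_of_nonneg_left hpartial (by positivity)
  have hfinal : γ + (γ/(Δ:ℝ)) * (r/(1-r)^2)
      = (1 + 1/(s - 1) + 1/s) * (Δ:ℝ)^2 := by
    rw [hrdef, hγdef, ← hs3]
    have h1r : 1 - (s-1)/s = 1/s := by field_simp; ring
    rw [h1r]
    field_simp
    ring
  rw [hsdef] at hfinal
  linarith

end ThueAux

theorem thue_le_thueChoice_le_dujmovic {V : Type} [Fintype V]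
    (G : SimpleGraph V) [DecidableRel G.Adj] (hΔ : 1 < G.maxDegree) :
    thueNumber G ≤ thueChoiceNumber G ∧
    (thueChoiceNumber G : ℤ) ≤
      ⌈(1 + 1 / ((G.maxDegree : ℝ) ^ ((1 : ℝ) / 3) - 1)
          + 1 / ((G.maxDegree : ℝ) ^ ((1 : ℝ) / 3))) * (G.maxDegree : ℝ) ^ 2⌉ := by
  classical
  set Δ := G.maxDegree with hΔdef
  have hΔ2 : 2 ≤ Δ := hΔ
  set s : ℝ := (Δ:ℝ) ^ ((1:ℝ)/3) with hsdef
  set f : ℝ := (1 + 1/(s-1) + 1/s) * (Δ:ℝ)^2 with hfdef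
  set γ : ℝ := (1 + 1/(s-1)) * (Δ:ℝ)^2 with hγdef
  obtain ⟨hγ1, hkey⟩ := ThueAux.analytic Δ hΔ2 (Fintype.card V)
  rw [← hsdef, ← hγdef, ← hfdef] at hkey
  rw [← hsdef, ← hγdef] at hγ1
  have hγ0 : (0:ℝ) < γ := by linarith
  have hsum0 : 0 ≤ ∑ n ∈ Finset.Icc 1 (Fintype.card V),
      (n:ℝ) * (Δ:ℝ)^(2*n-1) / γ^(n-1) := by
    apply Finset.sum_nonneg
    intro n _
    have h1 : (0:ℝ) ≤ (n:ℝ) * (Δ:ℝ)^(2*n-1) := by positivity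
    have h2 : (0:ℝ) < γ^(n-1) := by positivity
    exact div_nonneg h1 (le_of_lt h2)
  have hfpos : (0:ℝ) < f := by linarith
  set k : ℕ := ⌈f⌉.toNat with hkdef
  have hk0 : (0:ℤ) ≤ ⌈f⌉ := Int.ceil_nonneg (le_of_lt hfpos)
  have hkZ : (k : ℤ) = ⌈f⌉ := Int.toNat_of_nonneg hk0
  have hkf : f ≤ (k:ℝ) := by
    have : ((k:ℤ) : ℝ) = ((⌈f⌉ : ℤ) : ℝ) := by exact_mod_cast hkZ
    push_cast at this
    rw [this]
    exact Int.le_ceil f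
  have hchoice : ∀ L : V → Finset ℕ, (∀ v, k ≤ (L v).card) →
      ∃ φ : V → ℕ, (∀ v, φ v ∈ L v) ∧ Nonrepetitive G φ := by
    intro L hL
    have h1 := ThueAux.one_le_card_Fset (G := G) L k hL γ hγ1
      (by rw [← hΔdef]; linarith) Finset.univ
    have h2 : (ThueAux.Fset G L Finset.univ).Nonempty := by
      rw [← Finset.card_pos]; omega
    obtain ⟨φ, hφ⟩ := h2
    rw [ThueAux.mem_Fset] at hφ
    exact ⟨φ, fun u => hφ.1.1 u (Finset.mem_univ u), ThueAux.nonrep_of_nonrepOn hφ.2⟩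
  have hTC : thueChoiceNumber G ≤ k := by
    rw [thueChoiceNumber]
    exact Nat.sInf_le hchoice
  have hne : {k | ∀ L : V → Finset ℕ, (∀ v, k ≤ (L v).card) →
      ∃ φ : V → ℕ, (∀ v, φ v ∈ L v) ∧ Nonrepetitive G φ}.Nonempty := ⟨k, hchoice⟩
  constructor
  · have hmem0 : thueChoiceNumber G ∈ {k | ∀ L : V → Finset ℕ, (∀ v, k ≤ (L v).card) →
        ∃ φ : V → ℕ, (∀ v, φ v ∈ L v) ∧ Nonrepetitive G φ} := by
      rw [thueChoiceNumber]
      exact Nat.sInf_mem hne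
    set k₀ := thueChoiceNumber G
    obtain ⟨φ, hφmem, hφnr⟩ := hmem0 (fun _ => Finset.range k₀) (fun v => by simp)
    have hφlt : ∀ v, φ v < k₀ := fun v => Finset.mem_range.1 (hφmem v)
    rw [thueNumber]
    apply Nat.sInf_le
    refine ⟨fun v => ⟨φ v, hφlt v⟩, ?_⟩
    intro u w p hp l hl heq
    apply hφnr p hp (l.map Fin.val) (by simpa using hl)
    have e : p.support.map φ
        = (p.support.map (fun v => (⟨φ v, hφlt v⟩ : Fin k₀))).map Fin.val := by
      rw [List.map_map]; rfl
    rw [e, heq, List.map_append]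
  · calc (thueChoiceNumber G : ℤ) ≤ (k : ℤ) := by exact_mod_cast hTC
      _ = ⌈f⌉ := hkZ
end

section
/- For every finite simple graph G with maximum degree Δ ≥ 3, π(G) ≤ π_ℓ(G) ≤ ⌈Δ² + (3/2^{2/3})·Δ^{5/3} + 2^{2/3}·Δ^{5/3}/(Δ^{1/3} − 2^{1/3})⌉. -/
open SimpleGraph

set_option linter.unusedSectionVars false
set_option linter.unusedVariables false

section ThueProof

attribute [local instance] Classical.propDecidable
variable {V : Type} [Fintype V] (G : SimpleGraph V) [DecidableRel G.Adj]

noncomputable def chainsFrom : ℕ → V → Finset (List V)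
  | 0, _ => {[]}
  | (n+1), v => (G.neighborFinset v).biUnion fun w => ((chainsFrom n w).image (w :: ·))

lemma mem_chainsFrom {n : ℕ} {v : V} {l : List V} (h1 : l.length = n)
    (h2 : List.Chain G.Adj v l) : l ∈ chainsFrom G n v := by
  induction n generalizing v l with
  | zero => simp [chainsFrom, List.length_eq_zero_iff.mp h1]
  | succ n ih =>
    match l with
    | [] => simp at h1
    | w :: l' =>
      change List.IsChain G.Adj (v :: w :: l') at h2
      rw [List.isChain_cons_cons] at h2
      simp only [chainsFrom, Finset.mem_biUnion, mem_neighborFinset, Finset.mem_image]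
      exact ⟨w, h2.1, l', ih (by simpa using h1) h2.2, rfl⟩

lemma card_chainsFrom {Δ : ℕ} (hdeg : ∀ v, G.degree v ≤ Δ) (n : ℕ) (v : V) :
    (chainsFrom G n v).card ≤ Δ ^ n := by
  induction n generalizing v with
  | zero => simp [chainsFrom]
  | succ n ih =>
    calc (chainsFrom G (n+1) v).card
        ≤ ∑ w ∈ G.neighborFinset v, ((chainsFrom G n w).image (w :: ·)).card :=
          Finset.card_biUnion_le
      _ ≤ ∑ w ∈ G.neighborFinset v, Δ ^ n := by
          refine Finset.sum_le_sum fun w _ => ?_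
          exact le_trans Finset.card_image_le (ih w)
      _ = G.degree v * Δ ^ n := by rw [Finset.sum_const, smul_eq_mul, card_neighborFinset_eq_degree]
      _ ≤ Δ * Δ ^ n := Nat.mul_le_mul_right _ (hdeg v)
      _ = Δ ^ (n+1) := by ring

noncomputable def withAt (m i : ℕ) (v : V) : Finset (List V) :=
  ((chainsFrom G i v) ×ˢ (chainsFrom G (m - 1 - i) v)).image
    fun pr => pr.1.reverse ++ v :: pr.2

lemma card_withAt {Δ : ℕ} (hdeg : ∀ v, G.degree v ≤ Δ) {m i : ℕ} (v : V) (hi : i < m) :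
    (withAt G m i v).card ≤ Δ ^ (m - 1) := by
  calc (withAt G m i v).card ≤ ((chainsFrom G i v) ×ˢ (chainsFrom G (m - 1 - i) v)).card :=
        Finset.card_image_le
    _ = (chainsFrom G i v).card * (chainsFrom G (m - 1 - i) v).card := Finset.card_product _ _
    _ ≤ Δ ^ i * Δ ^ (m - 1 - i) :=
        Nat.mul_le_mul (card_chainsFrom G hdeg i v) (card_chainsFrom G hdeg _ v)
    _ = Δ ^ (m - 1) := by
        rw [← pow_add]
        congr 1
        omega

lemma chain'_iff_flip {l : List V} : List.Chain' (flip G.Adj) l ↔ List.Chain' G.Adj l := by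
  constructor
  · exact fun h => h.imp fun a b hab => hab.symm
  · exact fun h => h.imp fun a b hab => hab.symm

lemma mem_withAt {s : List V} {i : ℕ} {v : V} (hlen : i < s.length)
    (hchain : s.Chain' G.Adj) (hv : s[i] = v) : s ∈ withAt G s.length i v := by
  have hdecomp : s = s.take i ++ v :: s.drop (i+1) := by
    conv_lhs => rw [← List.take_append_drop i s]
    rw [List.drop_eq_getElem_cons hlen, hv]
  rw [hdecomp] at hchain
  change List.IsChain G.Adj _ at hchain
  rw [List.isChain_append] at hchain
  obtain ⟨hc1, hc2, hc3⟩ := hchain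
  simp only [withAt, Finset.mem_image, Finset.mem_product, Prod.exists]
  refine ⟨(s.take i).reverse, s.drop (i+1), ⟨?_, ?_⟩, by rw [List.reverse_reverse]; exact hdecomp.symm⟩
  · -- (s.take i).reverse ∈ chainsFrom G i v
    apply mem_chainsFrom
    · simp; omega
    · have : List.Chain' G.Adj ((s.take i) ++ [v]) := by
        change List.IsChain G.Adj _
        rw [List.isChain_append]
        refine ⟨hc1, List.isChain_singleton v, ?_⟩
        intro x hx y hy
        simp at hy
        subst hy
        exact hc3 x hx v rfl
      have h5 : List.Chain' G.Adj ((s.take i ++ [v]).reverse) :=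
        List.isChain_reverse.mpr ((chain'_iff_flip G).mpr this)
      rw [List.reverse_append] at h5
      simp at h5; exact h5
  · -- s.drop (i+1) ∈ chainsFrom G (s.length - 1 - i) v
    apply mem_chainsFrom
    · simp; omega
    · exact hc2

lemma recon {s : List V} {t : ℕ} (hnd : s.Nodup) (hlen : s.length = 2 * t)
    {ψ ψ' : V → ℕ}
    (h1 : s.map ψ = (s.map ψ).take t ++ (s.map ψ).take t)
    (h2 : s.map ψ' = (s.map ψ').take t ++ (s.map ψ').take t)
    (hoff : ∀ u, u ∉ s.take t → ψ u = ψ' u) :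
    ψ = ψ' := by
  have hA : ∀ χ : V → ℕ, ((s.map χ).take t).length = t := by
    intro χ; simp [hlen]; omega
  have key : ∀ χ : V → ℕ, s.map χ = (s.map χ).take t ++ (s.map χ).take t →
      ∀ j, j < t → (s.map χ)[j+t]? = (s.map χ)[j]? := by
    intro χ hχ j hj
    conv_lhs => rw [hχ]
    conv_rhs => rw [hχ]
    rw [List.getElem?_append_right (by rw [hA]; omega), hA,
      List.getElem?_append, if_pos (by rw [hA]; omega)]
    congr 1
    omega
  funext u
  by_cases hu : u ∈ s.take t
  case neg => exact hoff u hu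
  obtain ⟨j, hjlen, hju⟩ := List.mem_iff_getElem.mp hu
  have hjt : j < t := by simp [hlen] at hjlen; omega
  have hjs : j < s.length := by omega
  have hjts : j + t < s.length := by omega
  have hsj : s[j]'hjs = u := by rw [← hju]; exact List.getElem_take.symm
  set m := s[j+t]'hjts with hm
  have hmem' : m ∉ s.take t := by
    intro hmem
    obtain ⟨j', hj'len, hj'⟩ := List.mem_iff_getElem.mp hmem
    have hj't : j' < t := by simp [hlen] at hj'len; omega
    have hj's : j' < s.length := by omega
    have heq : s[j']'hj's = m := by rw [← hj']; exact List.getElem_take.symm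
    have heq2 : s[j']'hj's = s[j+t]'hjts := heq.trans hm
    have h3 := (List.Nodup.getElem_inj_iff hnd).mp heq2
    omega
  have eq1 : ∀ χ : V → ℕ, s.map χ = (s.map χ).take t ++ (s.map χ).take t → χ u = χ m := by
    intro χ hχ
    have hk := key χ hχ j hjt
    rw [List.getElem?_eq_getElem (by simpa using hjts),
      List.getElem?_eq_getElem (by simpa using hjs)] at hk
    simp only [List.getElem_map] at hk
    rw [Option.some_inj] at hk
    rw [← hsj, hm]
    exact hk.symm
  rw [eq1 ψ h1, eq1 ψ' h2]
  exact hoff m hmem'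

/-- List-level nonrepetitiveness on a vertex subset `S`. -/
def NRL (S : Finset V) (φ : V → ℕ) : Prop :=
  ∀ s : List V, s.Chain' G.Adj → s.Nodup → (∀ x ∈ s, x ∈ S) →
    ∀ l : List ℕ, l ≠ [] → s.map φ ≠ l ++ l

def IsWit (S : Finset V) (ψ : V → ℕ) (v : V) (s : List V) (t i : ℕ) : Prop :=
  s.Chain' G.Adj ∧ s.Nodup ∧ (∀ x ∈ s, x ∈ S) ∧ s.length = 2 * t ∧ 1 ≤ t ∧ i < t ∧
    (∃ h : i < s.length, s[i] = v) ∧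
    s.map ψ = (s.map ψ).take t ++ (s.map ψ).take t

lemma getElem_congr' {α : Type*} (l : List α) {i j : ℕ} (h : i = j) (hi : i < l.length) :
    l[i]'hi = l[j]'(h ▸ hi) := by subst h; rfl

lemma exists_wit {S : Finset V} {v : V} {φ : V → ℕ} {c : ℕ} (hv : v ∈ S)
    (hφ : NRL G (S.erase v) φ) (hbad : ¬ NRL G S (Function.update φ v c)) :
    ∃ s t i, IsWit G S (Function.update φ v c) v s t i := by
  set ψ := Function.update φ v c with hψ
  simp only [NRL, not_forall] at hbad
  obtain ⟨s₀, hchain, hnd, hmem, l, hl, heq⟩ := hbad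
  rw [not_not] at heq
  have ht1 : 1 ≤ l.length := by
    rcases l with _ | _
    · exact absurd rfl hl
    · simp
  set t := l.length with htdef
  have hslen : s₀.length = 2 * t := by
    have := congrArg List.length heq
    simpa [two_mul] using this
  have htake : (s₀.map ψ).take t = l := by rw [heq]; exact List.take_left' rfl
  have hrep : s₀.map ψ = (s₀.map ψ).take t ++ (s₀.map ψ).take t := by
    rw [htake, heq]
  have hvmem : v ∈ s₀ := by
    by_contra hvn
    have hmem' : ∀ x ∈ s₀, x ∈ S.erase v := by
      intro x hx
      exact Finset.mem_erase.mpr ⟨fun h => hvn (by rw [← h]; exact hx), hmem x hx⟩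
    have : s₀.map φ = s₀.map ψ := by
      apply List.map_congr_left
      intro a ha
      rw [hψ, Function.update_of_ne (fun h => hvn (by rw [← h]; exact ha))]
    exact hφ s₀ hchain hnd hmem' l hl (this.trans heq)
  obtain ⟨j, hjlen, hjv⟩ := List.mem_iff_getElem.mp hvmem
  by_cases hjt : j < t
  · exact ⟨s₀, t, j, hchain, hnd, hmem, hslen, ht1, hjt, ⟨hjlen, hjv⟩, hrep⟩
  · refine ⟨s₀.reverse, t, 2*t - 1 - j, ?_, (List.nodup_reverse.mpr hnd), ?_, by simpa using hslen,
      ht1, by omega, ?_, ?_⟩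
    · exact List.isChain_reverse.mpr ((chain'_iff_flip G).mpr hchain)
    · intro x hx; exact hmem x (List.mem_reverse.mp hx)
    · refine ⟨by simp; omega, ?_⟩
      rw [List.getElem_reverse]
      rw [getElem_congr' _ (show s₀.length - 1 - (2*t-1-j) = j by omega)]
      exact hjv
    · rw [List.map_reverse, heq, List.reverse_append]
      congr 1 <;> exact (List.take_left' (by simp [htdef])).symm

noncomputable def colSet (L : V → Finset ℕ) (S : Finset V) : Finset (V → ℕ) :=
  (Fintype.piFinset fun w => if w ∈ S then L w else {0}).filter (fun φ => NRL G S φ)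

lemma fiber_card_le {S : Finset V} {v : V} {L : V → Finset ℕ} {s : List V} {t i : ℕ}
    (B : Finset ((V → ℕ) × ℕ))
    (hmem : ∀ p ∈ B, p.1 ∈ colSet G L (S.erase v) ∧
      IsWit G S (Function.update p.1 v p.2) v s t i) :
    B.card ≤ (colSet G L (S \ (s.take t).toFinset)).card := by
  classical
  set H := (s.take t).toFinset with hH
  set r : (V → ℕ) × ℕ → (V → ℕ) :=
    fun p u => if u ∈ s.take t then 0 else Function.update p.1 v p.2 u with hr
  apply Finset.card_le_card_of_injOn r
  · -- maps into colSet
    intro p hp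
    obtain ⟨hcol, hchain, hnd, hmemS, hslen, ht1, hit, ⟨his, hsiv⟩, hrep⟩ := hmem p hp
    rw [colSet, Finset.mem_filter, Fintype.mem_piFinset] at hcol
    obtain ⟨hpi, hNR⟩ := hcol
    have hvH : v ∈ s.take t := by
      rw [← hsiv]
      have hi' : i < (s.take t).length := by simp [hslen]; omega
      exact (List.getElem_take (h := hi')) ▸ List.getElem_mem hi'
    rw [Finset.mem_coe, colSet, Finset.mem_filter, Fintype.mem_piFinset]
    constructor
    · intro u
      by_cases huH : u ∈ s.take t
      · simp only [hr, if_pos huH]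
        have : u ∉ S \ H := by simp [hH]; intro _; exact huH
        rw [if_neg this]
        exact Finset.mem_singleton_self 0
      · simp only [hr, if_neg huH]
        have huv : u ≠ v := fun h => huH (h ▸ hvH)
        rw [Function.update_of_ne huv]
        by_cases huS : u ∈ S
        · have h1 : u ∈ S \ H := by
            simp [hH, huS]
            exact fun hc => huH hc
          rw [if_pos h1]
          have := hpi u
          rwa [if_pos (Finset.mem_erase.mpr ⟨huv, huS⟩)] at this
        · have h1 : u ∉ S \ H := fun hc => huS (Finset.mem_sdiff.mp hc).1
          rw [if_neg h1]
          have := hpi u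
          rwa [if_neg (fun hc => huS (Finset.mem_of_mem_erase hc))] at this
    · intro s' hchain' hnd' hmem' l hl heq'
      have hs'H : ∀ x ∈ s', x ∉ s.take t := by
        intro x hx
        have := hmem' x hx
        rw [Finset.mem_sdiff] at this
        exact fun hc => this.2 (List.mem_toFinset.mpr hc)
      have hs'v : ∀ x ∈ s', x ≠ v := fun x hx h => hs'H x hx (h ▸ hvH)
      have e1 : s'.map (r p) = s'.map p.1 := by
        apply List.map_congr_left
        intro a ha
        simp only [hr, if_neg (hs'H a ha)]
        exact Function.update_of_ne (hs'v a ha) _ _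
      refine hNR s' hchain' hnd' ?_ l hl (e1 ▸ heq')
      intro x hx
      exact Finset.mem_erase.mpr ⟨hs'v x hx, (Finset.mem_sdiff.mp (hmem' x hx)).1⟩
  · -- injective on B
    intro p hp q hq hrpq
    obtain ⟨hcolp, _, hndp, _, hslenp, _, _, ⟨hisp, hsivp⟩, hrepp⟩ := hmem p hp
    obtain ⟨hcolq, _, _, _, _, _, _, _, hrepq⟩ := hmem q hq
    have hvH : v ∈ s.take t := by
      rw [← hsivp]
      have hi' : i < (s.take t).length := by simp [hslenp]; omega
      exact (List.getElem_take (h := hi')) ▸ List.getElem_mem hi'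
    have hoff : ∀ u, u ∉ s.take t → Function.update p.1 v p.2 u = Function.update q.1 v q.2 u := by
      intro u hu
      have := congrFun hrpq u
      simpa only [hr, if_neg hu] using this
    have hψ : Function.update p.1 v p.2 = Function.update q.1 v q.2 :=
      recon hndp hslenp hrepp hrepq hoff
    have h2 : p.2 = q.2 := by
      have := congrFun hψ v
      simpa only [Function.update_self] using this
    have h1 : p.1 = q.1 := by
      funext u
      by_cases huv : u = v
      · subst huv
        rw [colSet, Finset.mem_filter, Fintype.mem_piFinset] at hcolp hcolq
        have hp0 := hcolp.1 u
        have hq0 := hcolq.1 u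
        rw [if_neg (Finset.notMem_erase u S)] at hp0 hq0
        rw [Finset.mem_singleton.mp hp0, Finset.mem_singleton.mp hq0]
      · have := congrFun hψ u
        rwa [Function.update_of_ne huv, Function.update_of_ne huv] at this
    exact Prod.ext h1 h2

theorem sum_biUnion_le' {α β : Type*} [DecidableEq α] [DecidableEq β]
    (s : Finset α) (t : α → Finset β) (f : β → ℝ) (hf : ∀ b, 0 ≤ f b) :
    ∑ x ∈ s.biUnion t, f x ≤ ∑ a ∈ s, ∑ x ∈ t a, f x := by
  induction s using Finset.induction with
  | empty => simp
  | insert _ _ ha ih =>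
    rename_i a s'
    rw [Finset.biUnion_insert, Finset.sum_insert ha]
    have hsplit : ∑ x ∈ t a ∪ s'.biUnion t, f x ≤ ∑ x ∈ t a, f x + ∑ x ∈ s'.biUnion t, f x := by
      conv_lhs => rw [← Finset.union_sdiff_self_eq_union, Finset.sum_union Finset.disjoint_sdiff]
      gcongr
      · intro b _ _; exact hf b
      · exact Finset.sdiff_subset
    exact hsplit.trans (by gcongr)

theorem key {Δ k : ℕ} (hdeg : ∀ v, G.degree v ≤ Δ) {β : ℝ} (hβ1 : 1 ≤ β)
    (hk : ∀ m : ℕ, β + ∑ t ∈ Finset.range m, (t : ℝ) * (Δ : ℝ) ^ (2 * t - 1) / β ^ (t - 1)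
      ≤ (k : ℝ))
    {L : V → Finset ℕ} (hL : ∀ v, k ≤ (L v).card) :
    ∀ N : ℕ, ∀ S : Finset V, S.card ≤ N → ∀ v ∈ S,
      β * ((colSet G L (S.erase v)).card : ℝ) ≤ ((colSet G L S).card : ℝ) := by
  intro N
  induction N with
  | zero =>
    intro S hS v hv
    have : S = ∅ := Finset.card_eq_zero.mp (Nat.le_zero.mp hS)
    subst this
    exact absurd hv (Finset.notMem_empty v)
  | succ N IH =>
    intro S hS v hv
    have hβ0 : (0:ℝ) < β := lt_of_lt_of_le one_pos hβ1
    -- the chain lemma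
    have chain : ∀ R : Finset V, R ⊆ S.erase v →
        β ^ R.card * ((colSet G L (S.erase v \ R)).card : ℝ)
          ≤ ((colSet G L (S.erase v)).card : ℝ) := by
      intro R
      induction R using Finset.induction with
      | empty => simp
      | insert _ _ hu ihR =>
        rename_i u R'
        intro hsub
        have hsub' : R' ⊆ S.erase v := fun x hx => hsub (Finset.mem_insert_of_mem hx)
        have hu' : u ∈ S.erase v := hsub (Finset.mem_insert_self u R')
        have hT : (S.erase v \ R').card ≤ N := by
          have h1 : S.erase v \ R' ⊆ S.erase v := Finset.sdiff_subset
          have h2 : (S.erase v).card < S.card := Finset.card_erase_lt_of_mem hv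
          have h3 := Finset.card_le_card h1
          omega
        have huT : u ∈ S.erase v \ R' := Finset.mem_sdiff.mpr ⟨hu', hu⟩
        have step := IH (S.erase v \ R') hT u huT
        have heq : (S.erase v \ R').erase u = S.erase v \ insert u R' := by
          ext x
          simp only [Finset.mem_erase, Finset.mem_sdiff, Finset.mem_insert]
          tauto
        rw [heq] at step
        rw [Finset.card_insert_of_notMem hu, pow_succ]
        calc β ^ R'.card * β * ((colSet G L (S.erase v \ insert u R')).card : ℝ)
            = β ^ R'.card * (β * ((colSet G L (S.erase v \ insert u R')).card : ℝ)) := by ring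
          _ ≤ β ^ R'.card * ((colSet G L (S.erase v \ R')).card : ℝ) :=
              mul_le_mul_of_nonneg_left step (pow_nonneg hβ0.le _)
          _ ≤ _ := ihR hsub'
    -- main body
    set n := Fintype.card V with hn
    set ext : (V → ℕ) × ℕ → (V → ℕ) := fun p => Function.update p.1 v p.2 with hext
    set pairs := (colSet G L (S.erase v)) ×ˢ (L v) with hpairs
    set good := pairs.filter (fun p => NRL G S (ext p)) with hgood
    set bad := pairs.filter (fun p => ¬ NRL G S (ext p)) with hbad
    have hsplit : good.card + bad.card = pairs.card :=
      Finset.card_filter_add_card_filter_not _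
    have hpairscard : pairs.card = (colSet G L (S.erase v)).card * (L v).card :=
      Finset.card_product _ _
    have hgoodle : good.card ≤ (colSet G L S).card := by
      apply Finset.card_le_card_of_injOn ext
      · intro p hp
        rw [Finset.mem_coe, hgood, Finset.mem_filter] at hp
        obtain ⟨hpp, hNRp⟩ := hp
        rw [hpairs, Finset.mem_product] at hpp
        obtain ⟨hp1, hp2⟩ := hpp
        rw [colSet, Finset.mem_filter, Fintype.mem_piFinset] at hp1
        rw [Finset.mem_coe, colSet, Finset.mem_filter, Fintype.mem_piFinset]
        refine ⟨?_, hNRp⟩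
        intro u
        by_cases huv : u = v
        · subst huv
          rw [if_pos hv]
          simpa [hext] using hp2
        · have : ext p u = p.1 u := by simp [hext, Function.update_of_ne huv]
          rw [this]
          by_cases huS : u ∈ S
          · rw [if_pos huS]
            have := hp1.1 u
            rwa [if_pos (Finset.mem_erase.mpr ⟨huv, huS⟩)] at this
          · rw [if_neg huS]
            have := hp1.1 u
            rwa [if_neg (fun hc => huS (Finset.mem_of_mem_erase hc))] at this
      · intro p hp q hq hpq
        have hp' := Finset.mem_coe.mp hp
        have hq' := Finset.mem_coe.mp hq
        rw [hgood, Finset.mem_filter, hpairs, Finset.mem_product] at hp' hq'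
        have hp1 := hp'.1.1
        have hq1 := hq'.1.1
        rw [colSet, Finset.mem_filter, Fintype.mem_piFinset] at hp1 hq1
        have h2 : p.2 = q.2 := by
          have := congrFun hpq v
          simpa [hext, Function.update_self] using this
        have h1 : p.1 = q.1 := by
          funext u
          by_cases huv : u = v
          · subst huv
            have hp0 := hp1.1 u
            have hq0 := hq1.1 u
            rw [if_neg (Finset.notMem_erase u S)] at hp0 hq0
            rw [Finset.mem_singleton.mp hp0, Finset.mem_singleton.mp hq0]
          · have := congrFun hpq u
            simpa [hext, Function.update_of_ne huv] using this
        exact Prod.ext h1 h2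
    -- witnesses for bad pairs
    have hbadwit : ∀ p ∈ bad, p.1 ∈ colSet G L (S.erase v) ∧
        ∃ w : List V × ℕ × ℕ, IsWit G S (ext p) v w.1 w.2.1 w.2.2 := by
      intro p hp
      rw [hbad, Finset.mem_filter] at hp
      obtain ⟨hpp, hnbad⟩ := hp
      rw [hpairs, Finset.mem_product] at hpp
      have hNR' : NRL G (S.erase v) p.1 := (Finset.mem_filter.mp hpp.1).2
      obtain ⟨s, t, i, hw⟩ := exists_wit G hv hNR' hnbad
      exact ⟨hpp.1, ⟨(s, t, i), hw⟩⟩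
    set W : (V → ℕ) × ℕ → List V × ℕ × ℕ := fun p =>
      if h : ∃ w : List V × ℕ × ℕ, IsWit G S (ext p) v w.1 w.2.1 w.2.2 then h.choose
      else ([], 0, 0) with hW
    have hWspec : ∀ p ∈ bad, IsWit G S (ext p) v (W p).1 (W p).2.1 (W p).2.2 := by
      intro p hp
      obtain ⟨-, hex⟩ := hbadwit p hp
      rw [hW]
      simp only [dif_pos hex]
      exact hex.choose_spec
    set allWits : Finset (List V × ℕ × ℕ) := (Finset.range (n+1)).biUnion (fun t =>
      (Finset.range t).biUnion (fun i =>
        (withAt G (2*t) i v).image (fun s => (s, t, i)))) with hallW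
    have hWmem : ∀ p ∈ bad, W p ∈ allWits := by
      intro p hp
      obtain ⟨hchain, hnd, hmemS, hslen, ht1, hit, ⟨his, hsiv⟩, hrep⟩ := hWspec p hp
      rw [hallW]
      simp only [Finset.mem_biUnion, Finset.mem_range, Finset.mem_image]
      refine ⟨(W p).2.1, ?_, (W p).2.2, hit, (W p).1, ?_, rfl⟩
      · have hlc := hnd.length_le_card
        rw [hslen] at hlc
        rw [hn] at *
        omega
      · have hmw := mem_withAt G (s := (W p).1) (i := (W p).2.2) (v := v)
          (by omega) hchain hsiv
        rwa [hslen] at hmw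
    have hfibsum : bad.card = ∑ w ∈ allWits, (bad.filter (fun p => W p = w)).card :=
      Finset.card_eq_sum_card_fiberwise hWmem
    have hfib_le : ∀ w ∈ allWits,
        ((bad.filter (fun p => W p = w)).card : ℝ)
          ≤ ((colSet G L (S.erase v)).card : ℝ) / β ^ (w.2.1 - 1) := by
      rintro ⟨s, t, i⟩ _
      by_cases hne : (bad.filter (fun p => W p = (s,t,i))).Nonempty
      case neg =>
        rw [Finset.not_nonempty_iff_eq_empty] at hne
        rw [hne]
        simp only [Finset.card_empty, Nat.cast_zero]
        positivity
      obtain ⟨p₀, hp₀⟩ := hne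
      have hp₀bad : p₀ ∈ bad := (Finset.mem_filter.mp hp₀).1
      have hWp₀ : W p₀ = (s,t,i) := (Finset.mem_filter.mp hp₀).2
      have hw₀ := hWspec p₀ hp₀bad
      rw [hWp₀] at hw₀
      dsimp only [IsWit] at hw₀
      obtain ⟨hchain, hnd, hmemS, hslen, ht1, hit, ⟨his, hsiv⟩, hrep⟩ := hw₀
      have h1 : (bad.filter (fun p => W p = (s,t,i))).card
          ≤ (colSet G L (S \ (s.take t).toFinset)).card := by
        apply fiber_card_le
        intro p hp
        have hpbad := (Finset.mem_filter.mp hp).1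
        have hWp := (Finset.mem_filter.mp hp).2
        have h3 := hWspec p hpbad
        rw [hWp] at h3
        exact ⟨(hbadwit p hpbad).1, h3⟩
      set H := (s.take t).toFinset with hHd
      have hndtake : (s.take t).Nodup := (List.take_sublist t s).nodup hnd
      have hHcard : H.card = t := by
        rw [hHd, List.toFinset_card_of_nodup hndtake, List.length_take, hslen]
        omega
      have hvH : v ∈ H := by
        rw [hHd, List.mem_toFinset, ← hsiv]
        have hi' : i < (s.take t).length := by rw [List.length_take, hslen]; omega
        exact (List.getElem_take (h := hi')) ▸ List.getElem_mem hi'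
      have hHsub : H ⊆ S := by
        intro x hx
        rw [hHd, List.mem_toFinset] at hx
        exact hmemS x ((List.take_sublist t s).subset hx)
      have hRsub : H.erase v ⊆ S.erase v := by
        intro x hx
        rw [Finset.mem_erase] at hx ⊢
        exact ⟨hx.1, hHsub hx.2⟩
      have hRcard : (H.erase v).card = t - 1 := by
        rw [Finset.card_erase_of_mem hvH, hHcard]
      have hSdiff : S.erase v \ (H.erase v) = S \ H := by
        ext x
        simp only [Finset.mem_sdiff, Finset.mem_erase]
        constructor
        · rintro ⟨⟨hxv, hxS⟩, hxn⟩
          exact ⟨hxS, fun hxH => hxn ⟨hxv, hxH⟩⟩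
        · rintro ⟨hxS, hxH⟩
          exact ⟨⟨fun h => hxH (h ▸ hvH), hxS⟩, fun hc => hxH hc.2⟩
      have hchainapp := chain (H.erase v) hRsub
      rw [hRcard, hSdiff] at hchainapp
      calc ((bad.filter (fun p => W p = (s,t,i))).card : ℝ)
          ≤ ((colSet G L (S \ H)).card : ℝ) := Nat.cast_le.mpr h1
        _ ≤ ((colSet G L (S.erase v)).card : ℝ) / β ^ (t - 1) := by
            rw [le_div_iff₀ (pow_pos hβ0 _), mul_comm]
            exact hchainapp
    -- summing up the bad bound
    have hbadsum : (bad.card : ℝ) ≤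
        (∑ t ∈ Finset.range (n+1), (t:ℝ) * (Δ:ℝ)^(2*t-1) / β^(t-1))
          * ((colSet G L (S.erase v)).card : ℝ) := by
      have c0 : ∀ t : ℕ, (0:ℝ) ≤ ((colSet G L (S.erase v)).card : ℝ) / β ^ (t - 1) := by
        intro t; positivity
      calc (bad.card : ℝ)
          = ∑ w ∈ allWits, ((bad.filter (fun p => W p = w)).card : ℝ) := by
            rw [hfibsum, Nat.cast_sum]
        _ ≤ ∑ w ∈ allWits, ((colSet G L (S.erase v)).card : ℝ) / β ^ (w.2.1 - 1) :=
            Finset.sum_le_sum hfib_le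
        _ ≤ ∑ t ∈ Finset.range (n+1), ∑ w ∈ (Finset.range t).biUnion (fun i =>
              (withAt G (2*t) i v).image (fun s => (s, t, i))),
              ((colSet G L (S.erase v)).card : ℝ) / β ^ (w.2.1 - 1) := by
            rw [hallW]
            exact sum_biUnion_le' _ _ _ (fun w => c0 w.2.1)
        _ ≤ ∑ t ∈ Finset.range (n+1), ∑ i ∈ Finset.range t,
              ∑ w ∈ (withAt G (2*t) i v).image (fun s => (s, t, i)),
              ((colSet G L (S.erase v)).card : ℝ) / β ^ (w.2.1 - 1) := by
            refine Finset.sum_le_sum fun t _ => ?_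
            exact sum_biUnion_le' _ _ _ (fun w => c0 w.2.1)
        _ = ∑ t ∈ Finset.range (n+1), ∑ i ∈ Finset.range t,
              ∑ s ∈ withAt G (2*t) i v,
              ((colSet G L (S.erase v)).card : ℝ) / β ^ (t - 1) := by
            refine Finset.sum_congr rfl fun t _ => Finset.sum_congr rfl fun i _ => ?_
            rw [Finset.sum_image (by intro a _ b _ h; exact (Prod.mk.injEq _ _ _ _).mp h |>.1)]
        _ ≤ ∑ t ∈ Finset.range (n+1), ∑ i ∈ Finset.range t,
              ((Δ:ℝ)^(2*t-1) * (((colSet G L (S.erase v)).card : ℝ) / β ^ (t - 1))) := by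
            refine Finset.sum_le_sum fun t _ => Finset.sum_le_sum fun i hi => ?_
            rw [Finset.sum_const, nsmul_eq_mul]
            have hcw : (withAt G (2*t) i v).card ≤ Δ ^ (2*t-1) := by
              apply card_withAt G hdeg
              rw [Finset.mem_range] at hi
              omega
            have hcwR : ((withAt G (2*t) i v).card : ℝ) ≤ (Δ:ℝ)^(2*t-1) := by
              exact_mod_cast hcw
            exact mul_le_mul_of_nonneg_right hcwR (c0 t)
        _ = ∑ t ∈ Finset.range (n+1),
              ((t:ℝ) * (Δ:ℝ)^(2*t-1) / β^(t-1))
                * ((colSet G L (S.erase v)).card : ℝ) := by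
            refine Finset.sum_congr rfl fun t _ => ?_
            rw [Finset.sum_const, Finset.card_range, nsmul_eq_mul]
            ring
        _ = _ := by rw [← Finset.sum_mul]
    -- conclusion
    have hkn := hk (n+1)
    have hNp0 : (0:ℝ) ≤ ((colSet G L (S.erase v)).card : ℝ) := Nat.cast_nonneg _
    have hpairsR : (k:ℝ) * ((colSet G L (S.erase v)).card : ℝ) ≤ (pairs.card : ℝ) := by
      rw [hpairscard]
      push_cast
      rw [mul_comm]
      gcongr
      exact_mod_cast hL v
    have hgoodR : (good.card : ℝ) = (pairs.card : ℝ) - (bad.card : ℝ) := by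
      rw [← hsplit]; push_cast; ring
    have hgoodcol : (good.card : ℝ) ≤ ((colSet G L S).card : ℝ) := Nat.cast_le.mpr hgoodle
    have hfinal : β ≤ (k:ℝ) - (∑ t ∈ Finset.range (n+1), (t:ℝ) * (Δ:ℝ)^(2*t-1) / β^(t-1)) := by
      linarith [hkn]
    calc β * ((colSet G L (S.erase v)).card : ℝ)
        ≤ ((k:ℝ) - ∑ t ∈ Finset.range (n+1), (t:ℝ) * (Δ:ℝ)^(2*t-1) / β^(t-1))
            * ((colSet G L (S.erase v)).card : ℝ) :=
          mul_le_mul_of_nonneg_right hfinal hNp0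
      _ = (k:ℝ) * ((colSet G L (S.erase v)).card : ℝ)
            - (∑ t ∈ Finset.range (n+1), (t:ℝ) * (Δ:ℝ)^(2*t-1) / β^(t-1))
                * ((colSet G L (S.erase v)).card : ℝ) := by ring
      _ ≤ (pairs.card : ℝ) - (bad.card : ℝ) := by linarith [hpairsR, hbadsum]
      _ = (good.card : ℝ) := hgoodR.symm
      _ ≤ ((colSet G L S).card : ℝ) := hgoodcol

lemma colSet_empty_nonempty (L : V → Finset ℕ) : (colSet G L ∅).Nonempty := by
  refine ⟨fun _ => 0, ?_⟩
  rw [colSet, Finset.mem_filter, Fintype.mem_piFinset]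
  constructor
  · intro w
    rw [if_neg (Finset.notMem_empty w)]
    exact Finset.mem_singleton_self 0
  · intro s _ _ hmem l hl heq
    match s with
    | [] =>
      have : l ++ l = [] := heq.symm
      exact hl (List.append_eq_nil_iff.mp this).1
    | x :: s' => exact absurd (hmem x (List.mem_cons_self)) (Finset.notMem_empty x)

lemma colSet_nonempty {Δ k : ℕ} (hdeg : ∀ v, G.degree v ≤ Δ) {β : ℝ} (hβ1 : 1 ≤ β)
    (hk : ∀ m : ℕ, β + ∑ t ∈ Finset.range m, (t : ℝ) * (Δ : ℝ) ^ (2 * t - 1) / β ^ (t - 1)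
      ≤ (k : ℝ))
    {L : V → Finset ℕ} (hL : ∀ v, k ≤ (L v).card) (S : Finset V) :
    (colSet G L S).Nonempty := by
  suffices h : ∀ N : ℕ, ∀ S : Finset V, S.card ≤ N → (colSet G L S).Nonempty from
    h S.card S le_rfl
  intro N
  induction N with
  | zero =>
    intro S hS
    have : S = ∅ := Finset.card_eq_zero.mp (Nat.le_zero.mp hS)
    subst this
    exact colSet_empty_nonempty G L
  | succ N IHn =>
    intro S hS
    rcases Finset.eq_empty_or_nonempty S with rfl | ⟨v, hv⟩
    · exact colSet_empty_nonempty G L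
    have h1 := key G hdeg hβ1 hk hL (N+1) S hS v hv
    have h2 : (colSet G L (S.erase v)).Nonempty := by
      apply IHn
      have := Finset.card_erase_lt_of_mem hv
      omega
    have h3 : (1:ℝ) ≤ (colSet G L (S.erase v)).card := by
      have := Finset.card_pos.mpr h2
      exact_mod_cast this
    have h4 : (0:ℝ) < ((colSet G L S).card : ℝ) := by
      calc (0:ℝ) < 1 * 1 := by norm_num
        _ ≤ β * ((colSet G L (S.erase v)).card : ℝ) := by
            apply mul_le_mul hβ1 h3 zero_le_one (le_trans zero_le_one hβ1)
        _ ≤ _ := h1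
    rw [Finset.card_pos.symm]
    exact_mod_cast Nat.cast_pos.mp h4

end ThueProof


set_option maxHeartbeats 1000000 in
lemma analytic {Δ : ℕ} (hΔ : 3 ≤ Δ) :
    ∃ β : ℝ, 1 ≤ β ∧ ∀ m : ℕ,
      β + ∑ t ∈ Finset.range m, (t : ℝ) * (Δ : ℝ) ^ (2 * t - 1) / β ^ (t - 1) ≤
        (Δ : ℝ) ^ 2 + 3 / (2 : ℝ) ^ ((2 : ℝ) / 3) * (Δ : ℝ) ^ ((5 : ℝ) / 3)
          + (2 : ℝ) ^ ((2 : ℝ) / 3) * (Δ : ℝ) ^ ((5 : ℝ) / 3) /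
              ((Δ : ℝ) ^ ((1 : ℝ) / 3) - (2 : ℝ) ^ ((1 : ℝ) / 3)) := by
  have hD3 : (3:ℝ) ≤ (Δ:ℝ) := by exact_mod_cast hΔ
  have hDpos : (0:ℝ) < (Δ:ℝ) := by linarith
  set a : ℝ := (Δ:ℝ) ^ ((1:ℝ)/3) with ha
  set b : ℝ := (2:ℝ) ^ ((1:ℝ)/3) with hb
  have hapos : 0 < a := Real.rpow_pos_of_pos hDpos _
  have hbpos : 0 < b := Real.rpow_pos_of_pos (by norm_num) _
  have ha3 : a ^ 3 = (Δ:ℝ) := by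
    rw [ha, ← Real.rpow_natCast ((Δ:ℝ) ^ ((1:ℝ)/3)) 3, ← Real.rpow_mul hDpos.le]
    norm_num
  have hb3 : b ^ 3 = 2 := by
    rw [hb, ← Real.rpow_natCast ((2:ℝ) ^ ((1:ℝ)/3)) 3,
      ← Real.rpow_mul (by norm_num : (0:ℝ) ≤ 2)]
    norm_num
  have ha5 : (Δ:ℝ) ^ ((5:ℝ)/3) = a ^ 5 := by
    rw [ha, ← Real.rpow_natCast ((Δ:ℝ) ^ ((1:ℝ)/3)) 5, ← Real.rpow_mul hDpos.le]
    norm_num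
  have hb2 : (2:ℝ) ^ ((2:ℝ)/3) = b ^ 2 := by
    rw [hb, ← Real.rpow_natCast ((2:ℝ) ^ ((1:ℝ)/3)) 2,
      ← Real.rpow_mul (by norm_num : (0:ℝ) ≤ 2)]
    norm_num
  have hD2 : ((Δ:ℝ)) ^ 2 = a ^ 6 := by rw [← ha3]; ring
  have hb1 : 1 < b := by
    nlinarith [hb3, hbpos, sq_nonneg (b-1), sq_nonneg (b+1)]
  have hab : b < a := by
    by_contra hc
    push_neg at hc
    have : a ^ 3 ≤ b ^ 3 := pow_le_pow_left₀ hapos.le hc 3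
    rw [ha3, hb3] at this
    linarith
  have ha1 : 1 < a := lt_trans hb1 hab
  set β : ℝ := a ^ 6 + b * a ^ 5 with hβ
  have hβpos : 0 < β := by positivity
  have hβ1 : 1 ≤ β := by nlinarith [pow_pos hapos 5, pow_pos hapos 6, one_le_pow₀ ha1.le (n := 6)]
  refine ⟨β, hβ1, ?_⟩
  intro m
  set x : ℝ := a ^ 6 / β with hx
  have hx0 : 0 ≤ x := by positivity
  have hx1 : x < 1 := by
    rw [hx, div_lt_one hβpos]
    nlinarith [pow_pos hapos 5]
  have hxnorm : ‖x‖ < 1 := by rwa [Real.norm_eq_abs, abs_of_nonneg hx0]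
  have h1mx : 1 - x = b * a ^ 5 / β := by
    rw [hx]
    field_simp
    ring
  have hxD : x = (Δ:ℝ)^2/β := by rw [hx, hD2]
  -- sum bound
  have hterm : ∀ t : ℕ, (t : ℝ) * (Δ : ℝ) ^ (2 * t - 1) / β ^ (t - 1)
      = (Δ:ℝ) * ((t:ℝ) * x ^ (t - 1)) := by
    intro t
    match t with
    | 0 => simp
    | (t+1) =>
      have e1 : 2 * (t+1) - 1 = 2*t + 1 := by omega
      have e2 : (t+1) - 1 = t := by omega
      rw [e1, e2, hxD, div_pow]
      have hβne : β ^ t ≠ 0 := by positivity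
      field_simp
      ring
  have hgs : HasSum (fun j : ℕ => ((j:ℝ)+1) * x^j) (1/(1-x)^2) := by
    have h1 := hasSum_coe_mul_geometric_of_norm_lt_one hxnorm
    have h2 := hasSum_geometric_of_norm_lt_one hxnorm
    have h3 := h1.add h2
    have hne : (1:ℝ) - x ≠ 0 := by linarith
    convert h3 using 1
    · rfl
    · funext n; ring
    · field_simp
      ring
  have hpart : ∑ t ∈ Finset.range m, (t:ℝ) * x ^ (t-1) ≤ 1/(1-x)^2 := by
    calc ∑ t ∈ Finset.range m, (t:ℝ) * x ^ (t-1)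
        ≤ ∑ t ∈ Finset.range (m+1), (t:ℝ) * x ^ (t-1) := by
          apply Finset.sum_le_sum_of_subset_of_nonneg
          · exact Finset.range_subset_range.mpr (by omega)
          · intro t _ _; positivity
      _ = ∑ j ∈ Finset.range m, ((j:ℝ)+1) * x ^ j := by
          rw [Finset.sum_range_succ']
          simp
      _ ≤ 1/(1-x)^2 := sum_le_hasSum _ (fun j _ => by positivity) hgs
  have hsum : ∑ t ∈ Finset.range m, (t : ℝ) * (Δ : ℝ) ^ (2 * t - 1) / β ^ (t - 1)
      ≤ (Δ:ℝ) * (1/(1-x)^2) := by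
    calc ∑ t ∈ Finset.range m, (t : ℝ) * (Δ : ℝ) ^ (2 * t - 1) / β ^ (t - 1)
        = ∑ t ∈ Finset.range m, (Δ:ℝ) * ((t:ℝ) * x ^ (t-1)) :=
          Finset.sum_congr rfl (fun t _ => hterm t)
      _ = (Δ:ℝ) * ∑ t ∈ Finset.range m, (t:ℝ) * x ^ (t-1) := by rw [Finset.mul_sum]
      _ ≤ (Δ:ℝ) * (1/(1-x)^2) := by
          apply mul_le_mul_of_nonneg_left hpart hDpos.le
  -- the algebraic estimate
  have hquot : (Δ:ℝ) * (1/(1-x)^2) = a^3*(a+b)^2/b^2 := by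
    rw [h1mx, ← ha3]
    have hβab : β = a^5*(a+b) := by rw [hβ]; ring
    rw [hβab]
    have hne1 : a + b ≠ 0 := by positivity
    field_simp
  have hbeq : b = 2/b^2 := by
    rw [eq_div_iff (by positivity)]
    rw [← hb3]; ring
  have h30 : 3/b^2*a^5 = b*a^5 + a^5/b^2 := by
    field_simp
    linear_combination (-1:ℝ) * hb3
  have hlast : (2*a^4*b + a^3*b^2)/b^2 ≤ b^2*a^5/(a-b) := by
    rw [div_le_div_iff₀ (by positivity) (by linarith)]
    have hdiff : b^2*a^5*b^2 - (2*a^4*b + a^3*b^2)*(a-b)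
        = a^5*b*(b^3-2) + a^4*b^2 + a^3*b^3 := by ring
    have h1 : a^5*b*(b^3-2) = 0 := by rw [hb3]; ring
    have hp1 : (0:ℝ) ≤ a^4*b^2 := by positivity
    have hp2 : (0:ℝ) ≤ a^3*b^3 := by positivity
    linarith [hdiff, h1, hp1, hp2]
  have hsplitfrac : a^3*(a+b)^2/b^2 = a^5/b^2 + (2*a^4*b + a^3*b^2)/b^2 := by ring
  calc β + ∑ t ∈ Finset.range m, (t : ℝ) * (Δ : ℝ) ^ (2 * t - 1) / β ^ (t - 1)
      ≤ β + (Δ:ℝ) * (1/(1-x)^2) := by linarith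
    _ = a^6 + b*a^5 + (a^5/b^2 + (2*a^4*b + a^3*b^2)/b^2) := by
        rw [hquot, hsplitfrac, hβ]
    _ ≤ a^6 + b*a^5 + (a^5/b^2 + b^2*a^5/(a-b)) := by linarith
    _ = a^6 + 3/b^2*a^5 + b^2*a^5/(a-b) := by rw [h30]; ring
    _ = _ := by rw [hD2, ha5, hb2]

theorem thue_le_thueChoice_le_goncalves {V : Type} [Fintype V]
    (G : SimpleGraph V) [DecidableRel G.Adj] (hΔ : 3 ≤ G.maxDegree) :
    thueNumber G ≤ thueChoiceNumber G ∧
    (thueChoiceNumber G : ℤ) ≤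
      ⌈(G.maxDegree : ℝ) ^ 2
          + 3 / (2 : ℝ) ^ ((2 : ℝ) / 3) * (G.maxDegree : ℝ) ^ ((5 : ℝ) / 3)
          + (2 : ℝ) ^ ((2 : ℝ) / 3) * (G.maxDegree : ℝ) ^ ((5 : ℝ) / 3) /
              ((G.maxDegree : ℝ) ^ ((1 : ℝ) / 3) - (2 : ℝ) ^ ((1 : ℝ) / 3))⌉ := by
  classical
  set Δ : ℕ := G.maxDegree with hΔdef
  set Bexpr : ℝ := (Δ : ℝ) ^ 2 + 3 / (2 : ℝ) ^ ((2 : ℝ) / 3) * (Δ : ℝ) ^ ((5 : ℝ) / 3)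
      + (2 : ℝ) ^ ((2 : ℝ) / 3) * (Δ : ℝ) ^ ((5 : ℝ) / 3) /
          ((Δ : ℝ) ^ ((1 : ℝ) / 3) - (2 : ℝ) ^ ((1 : ℝ) / 3)) with hBdef
  obtain ⟨β, hβ1, hkB⟩ := analytic hΔ
  have hB1 : (1:ℝ) ≤ Bexpr := by
    have h0 := hkB 0
    rw [Finset.range_zero, Finset.sum_empty, add_zero] at h0
    exact le_trans hβ1 h0
  have hceil_nonneg : 0 ≤ ⌈Bexpr⌉ := Int.ceil_nonneg (by linarith)
  set k₀ : ℕ := (⌈Bexpr⌉).toNat with hk₀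
  have hk₀B : Bexpr ≤ (k₀:ℝ) := by
    have h1 : ((k₀ : ℤ) : ℝ) = ((⌈Bexpr⌉ : ℤ) : ℝ) := by
      rw [hk₀, Int.toNat_of_nonneg hceil_nonneg]
    have h2 : Bexpr ≤ ((⌈Bexpr⌉ : ℤ) : ℝ) := Int.le_ceil _
    calc Bexpr ≤ ((⌈Bexpr⌉ : ℤ) : ℝ) := h2
      _ = ((k₀ : ℤ) : ℝ) := h1.symm
      _ = (k₀ : ℝ) := by push_cast; rfl
  have hkcond : ∀ m : ℕ, β + ∑ t ∈ Finset.range m,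
      (t : ℝ) * (Δ : ℝ) ^ (2 * t - 1) / β ^ (t - 1) ≤ (k₀ : ℝ) :=
    fun m => (hkB m).trans hk₀B
  have hdeg : ∀ v, G.degree v ≤ Δ := fun v => G.degree_le_maxDegree v
  have hchoice : k₀ ∈ {k | ∀ L : V → Finset ℕ, (∀ v, k ≤ (L v).card) →
      ∃ φ : V → ℕ, (∀ v, φ v ∈ L v) ∧ Nonrepetitive G φ} := by
    intro L hL
    obtain ⟨φ, hφ⟩ := colSet_nonempty G hdeg hβ1 hkcond hL Finset.univ
    rw [colSet, Finset.mem_filter, Fintype.mem_piFinset] at hφ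
    refine ⟨φ, fun v => ?_, ?_⟩
    · have := hφ.1 v
      rwa [if_pos (Finset.mem_univ v)] at this
    · intro u w p hp l hl heq
      exact hφ.2 p.support p.isChain_adj_support hp.support_nodup
        (fun x _ => Finset.mem_univ x) l hl heq
  have hne : {k | ∀ L : V → Finset ℕ, (∀ v, k ≤ (L v).card) →
      ∃ φ : V → ℕ, (∀ v, φ v ∈ L v) ∧ Nonrepetitive G φ}.Nonempty := ⟨k₀, hchoice⟩
  constructor
  · have hmem := Nat.sInf_mem hne
    obtain ⟨φ, hφL, hφNR⟩ := hmem (fun _ => Finset.range (thueChoiceNumber G))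
      (fun v => by simp [thueChoiceNumber])
    apply Nat.sInf_le
    refine ⟨fun v => ⟨φ v, Finset.mem_range.mp (hφL v)⟩, ?_⟩
    intro u w p hp l hl heq
    apply hφNR p hp (l.map Fin.val) (by simpa using hl)
    have hmm : p.support.map φ
        = (p.support.map (fun v => (⟨φ v, Finset.mem_range.mp (hφL v)⟩ :
            Fin (thueChoiceNumber G)))).map Fin.val := by
      rw [List.map_map]
      rfl
    rw [hmm, heq, List.map_append]
  · have hle : thueChoiceNumber G ≤ k₀ := Nat.sInf_le hchoice
    calc (thueChoiceNumber G : ℤ) ≤ (k₀ : ℤ) := by exact_mod_cast hle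
      _ = ⌈Bexpr⌉ := Int.toNat_of_nonneg hceil_nonneg
end

section
/- For the path graph P_n on n vertices: π(P_1) = 1, π(P_2) = π(P_3) = 2, and π(P_n) = 3 for every n > 3. -/
open SimpleGraph

section aux

/-! ### The Thue–Morse sequence and its overlap-freeness -/

def tmSeq (n : ℕ) : Bool := (Nat.digits 2 n).sum % 2 == 1

lemma tmSeq_two_mul (n : ℕ) : tmSeq (2 * n) = tmSeq n := by
  rcases Nat.eq_zero_or_pos n with h | h
  · simp [h]
  · unfold tmSeq
    rw [Nat.digits_def' (by norm_num : (1:ℕ) < 2) (by omega)]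
    simp [Nat.mul_div_cancel_left _ (by norm_num : (0:ℕ) < 2), Nat.mul_mod_right]

lemma tmSeq_two_mul_add_one (n : ℕ) : tmSeq (2 * n + 1) = !tmSeq n := by
  unfold tmSeq
  rw [Nat.digits_def' (by norm_num : (1:ℕ) < 2) (by omega)]
  have h1 : (2 * n + 1) % 2 = 1 := by omega
  have h2 : (2 * n + 1) / 2 = n := by omega
  rw [h1, h2]
  simp [List.sum_cons, Nat.add_mod]
  rcases Nat.mod_two_eq_zero_or_one ((Nat.digits 2 n).sum) with h | h <;> simp [h]

lemma tmSeq_even_ne (n : ℕ) : tmSeq (2 * n) ≠ tmSeq (2 * n + 1) := by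
  rw [tmSeq_two_mul, tmSeq_two_mul_add_one]
  cases tmSeq n <;> simp

lemma tmSeq_eq_succ_odd {m : ℕ} (h : tmSeq m = tmSeq (m + 1)) : m % 2 = 1 := by
  rcases Nat.even_or_odd m with ⟨a, ha⟩ | ⟨a, ha⟩
  · exfalso
    have ha' : m = 2 * a := by omega
    rw [ha'] at h
    exact tmSeq_even_ne a h
  · omega

lemma tmSeq_ne_of_even {n : ℕ} (h : n % 2 = 0) : tmSeq n ≠ tmSeq (n + 1) := by
  have e : n = 2 * (n / 2) := by omega
  rw [e]; exact tmSeq_even_ne _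

/-- Thue–Morse is overlap-free. -/
lemma tmSeq_overlapFree : ∀ k, 1 ≤ k → ∀ i, ¬ (∀ j ≤ k, tmSeq (i + j) = tmSeq (i + j + k)) := by
  intro k
  induction k using Nat.strong_induction_on with
  | _ k ih =>
    intro hk i hov
    rcases Nat.even_or_odd k with ⟨m, hm⟩ | hodd
    · have hm' : k = 2 * m := by omega
      have hm1 : 1 ≤ m := by omega
      rcases Nat.even_or_odd i with ⟨a, ha⟩ | ⟨a, ha⟩
      · refine ih m (by omega) hm1 a ?_
        intro j hj
        have h := hov (2*j) (by omega)
        have e2 : i + 2*j + k = 2*(a+j+m) := by omega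
        have e1 : i + 2*j = 2*(a+j) := by omega
        rw [e2, e1, tmSeq_two_mul, tmSeq_two_mul] at h
        exact h
      · refine ih m (by omega) hm1 a ?_
        intro j hj
        have h := hov (2*j) (by omega)
        have e2 : i + 2*j + k = 2*(a+j+m) + 1 := by omega
        have e1 : i + 2*j = 2*(a+j) + 1 := by omega
        rw [e2, e1, tmSeq_two_mul_add_one, tmSeq_two_mul_add_one] at h
        cases h1 : tmSeq (a+j) <;> cases h2 : tmSeq (a+j+m) <;> simp [h1, h2] at h ⊢
    · obtain ⟨w, hw⟩ := hodd
      by_cases hex : ∃ j, j + 1 ≤ k ∧ tmSeq (i + j) = tmSeq (i + j + 1)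
      · obtain ⟨j, hj, heq⟩ := hex
        have hmo : (i + j) % 2 = 1 := tmSeq_eq_succ_odd heq
        have h1 := hov j (by omega)
        have h2 := hov (j+1) (by omega)
        have e : i + (j+1) = i + j + 1 := by omega
        have e2 : i + j + 1 + k = i + j + k + 1 := by omega
        rw [e, e2] at h2
        have heq2 : tmSeq (i + j + k) = tmSeq (i + j + k + 1) := by
          rw [← h1, heq, h2]
        have hmo2 : (i + j + k) % 2 = 1 := tmSeq_eq_succ_odd heq2
        omega
      · push_neg at hex
        have alt : ∀ j ≤ k, tmSeq (i + j) = (tmSeq i).xor (decide (j % 2 = 1)) := by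
          intro j hj
          induction j with
          | zero => simp
          | succ j ihj =>
            have hne := hex j (by omega)
            have hprev := ihj (by omega)
            have hstep : tmSeq (i + (j+1)) = !tmSeq (i + j) := by
              have e : i + j + 1 = i + (j+1) := by omega
              rw [e] at hne
              cases h1 : tmSeq (i + j) <;> cases h2 : tmSeq (i + (j+1)) <;>
                simp [h1, h2] at hne ⊢
            rw [hstep, hprev]
            rcases Nat.mod_two_eq_zero_or_one j with e1 | e1
            · have e2 : (j+1) % 2 = 1 := by omega
              simp [e1, e2]
            · have e2 : (j+1) % 2 = 0 := by omega
              simp [e1, e2]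
        have h0 := hov 0 (by omega)
        have hk' := alt k (le_refl k)
        have e1 : k % 2 = 1 := by omega
        simp [e1] at hk'
        simp at h0
        rw [hk'] at h0
        cases tmSeq i <;> simp at h0

/-! ### A square-free ternary sequence -/

def tern (n : ℕ) : Fin 3 :=
  if tmSeq n = tmSeq (n + 1) then 2 else if tmSeq n then 1 else 0

lemma tern_eq_iff {m n : ℕ} (h : tern m = tern n) :
    ((tmSeq m = tmSeq (m+1)) ↔ (tmSeq n = tmSeq (n+1))) ∧
      ((tmSeq m ≠ tmSeq (m+1)) → tmSeq m = tmSeq n) := by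
  unfold tern at h
  cases h1 : tmSeq m <;> cases h2 : tmSeq (m+1) <;> cases h3 : tmSeq n <;>
    cases h4 : tmSeq (n+1) <;> simp [h1, h2, h3, h4] at h ⊢

lemma tern_squareFree : ∀ k, 1 ≤ k → ∀ a, ¬ (∀ j < k, tern (a+j) = tern (a+j+k)) := by
  intro k hk a hsq
  have hTm : ∀ j < k, tmSeq (a+j) = tmSeq (a+j+k) := by
    intro j hj
    have h := hsq j hj
    by_cases hp : tmSeq (a+j) = tmSeq (a+j+1)
    · have hq : tmSeq (a+j+k) = tmSeq (a+j+k+1) := (tern_eq_iff h).1.mp hp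
      have ho1 := tmSeq_eq_succ_odd hp
      have ho2 := tmSeq_eq_succ_odd hq
      have hke : k % 2 = 0 := by omega
      by_cases hjk : j + 1 < k
      case pos =>
        have h' := hsq (j+1) hjk
        have e1 : a + (j+1) = a + j + 1 := by omega
        rw [e1] at h'
        have hne1 : tmSeq (a+j+1) ≠ tmSeq (a+j+1+1) := tmSeq_ne_of_even (by omega)
        have key : tmSeq (a+j+1) = tmSeq (a+j+1+k) := (tern_eq_iff h').2 hne1
        have e2 : a+j+1+k = a+j+k+1 := by omega
        rw [e2] at key
        rw [hp, key, ← hq]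
      case neg =>
        have hj1 : 1 ≤ j := by omega
        obtain ⟨j', rfl⟩ : ∃ j', j = j' + 1 := ⟨j - 1, by omega⟩
        have h' := hsq j' (by omega)
        have hne1 : tmSeq (a+j') ≠ tmSeq (a+j'+1) := tmSeq_ne_of_even (by omega)
        have key : tmSeq (a+j') = tmSeq (a+j'+k) := (tern_eq_iff h').2 hne1
        have hne2 : tmSeq (a+j'+k) ≠ tmSeq (a+j'+k+1) := tmSeq_ne_of_even (by omega)
        have e1 : a + (j'+1) = a + j' + 1 := by omega
        have e2 : a + (j'+1) + k = a + j' + k + 1 := by omega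
        rw [e2, e1]
        rw [key] at hne1
        revert hne1 hne2
        cases tmSeq (a+j'+k) <;> cases tmSeq (a+j'+1) <;> cases tmSeq (a+j'+k+1) <;> simp
    · exact (tern_eq_iff h).2 hp
  obtain ⟨j0, rfl⟩ : ∃ j0, k = j0 + 1 := ⟨k - 1, by omega⟩
  set k := j0 + 1 with hkdef
  have hlast : tmSeq (a + k) = tmSeq (a + k + k) := by
    have h := hsq j0 (by omega)
    have hiff := (tern_eq_iff h).1
    have hprev := hTm j0 (by omega)
    have e1 : a + j0 + 1 = a + k := by omega
    have e2 : a + j0 + k + 1 = a + k + k := by omega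
    rw [e1, e2] at hiff
    revert hiff hprev
    cases tmSeq (a+j0) <;> cases tmSeq (a+j0+k) <;> cases tmSeq (a+k) <;>
      cases tmSeq (a+k+k) <;> simp
  apply tmSeq_overlapFree k hk a
  intro j hj
  rcases Nat.lt_or_ge j k with h | h
  · exact hTm j h
  · have : j = k := by omega
    rw [this]; exact hlast

/-! ### Paths in the path graph -/

lemma fin_mem_of_val_mem {n : ℕ} {u : Fin n} {l : List (Fin n)}
    (h : u.val ∈ l.map Fin.val) : u ∈ l := by
  obtain ⟨x, hx, hxv⟩ := List.mem_map.mp h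
  rwa [Fin.val_injective hxv] at hx

lemma pathGraph_support (n : ℕ) : ∀ {u v : Fin n} (p : (pathGraph n).Walk u v), p.IsPath →
    (p.support.map Fin.val = List.range' u.val (p.length + 1) ∧ v.val = u.val + p.length) ∨
    (p.support.map Fin.val = (List.range' v.val (p.length + 1)).reverse ∧
      u.val = v.val + p.length) := by
  intro u v p
  induction p with
  | nil => intro _; left; simp
  | @cons u w v h q ihq =>
    intro hp
    have hq : q.IsPath := hp.of_cons
    have hu : u ∉ q.support := by
      have := hp.support_nodup
      simp [SimpleGraph.Walk.support_cons] at this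
      exact this.1
    have hadj : u.val + 1 = w.val ∨ w.val + 1 = u.val := pathGraph_adj.mp h
    rcases ihq hq with ⟨hsup, hv⟩ | ⟨hsup, hw⟩
    · rcases hadj with h1 | h1
      · left
        constructor
        · rw [SimpleGraph.Walk.support_cons, List.map_cons, hsup, ← h1,
            SimpleGraph.Walk.length_cons]
          rw [List.range'_succ, List.range'_succ, List.range'_succ]
        · rw [SimpleGraph.Walk.length_cons]; omega
      · rcases Nat.eq_zero_or_pos q.length with hL | hL
        · right
          have hwv : w.val = v.val := by omega
          constructor
          · rw [SimpleGraph.Walk.support_cons, List.map_cons, hsup, hL]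
            rw [SimpleGraph.Walk.length_cons, hL]
            have : List.range' v.val 2 = [v.val, v.val + 1] := rfl
            rw [this]
            simp [← h1, hwv]
          · rw [SimpleGraph.Walk.length_cons, hL]; omega
        · exfalso
          apply hu
          apply fin_mem_of_val_mem
          rw [hsup, List.mem_range'_1]
          omega
    · rcases hadj with h1 | h1
      · rcases Nat.eq_zero_or_pos q.length with hL | hL
        · left
          have hwv : w.val = v.val := by omega
          constructor
          · rw [SimpleGraph.Walk.support_cons, List.map_cons, hsup, hL,
              SimpleGraph.Walk.length_cons, hL]
            have : List.range' u.val 2 = [u.val, u.val + 1] := rfl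
            rw [this]
            simp [h1, hwv]
          · rw [SimpleGraph.Walk.length_cons, hL]; omega
        · exfalso
          apply hu
          apply fin_mem_of_val_mem
          rw [hsup, List.mem_reverse, List.mem_range'_1]
          omega
      · right
        constructor
        · rw [SimpleGraph.Walk.support_cons, List.map_cons, hsup,
            SimpleGraph.Walk.length_cons]
          have e : List.range' v.val (q.length + 1 + 1) =
              List.range' v.val (q.length + 1) ++ [v.val + (q.length + 1)] :=
            List.range'_1_concat
          rw [e, List.reverse_append, List.reverse_singleton, List.singleton_append]
          congr 1
          omega
        · rw [SimpleGraph.Walk.length_cons]; omega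

end aux

section aux2

lemma no_square_of_range' {β : Type*} {n : ℕ} {c : ℕ → β}
    (hc : ∀ a k, 1 ≤ k → a + 2*k ≤ n → ∃ j, j < k ∧ c (a+j) ≠ c (a+j+k))
    {a L : ℕ} (hbound : a + L < n) {l : List β} (hl : l ≠ [])
    (heq : (List.range' a (L+1)).map c = l ++ l) : False := by
  set k := l.length with hk
  have hk1 : 1 ≤ k := by
    cases l with
    | nil => exact absurd rfl hl
    | cons x xs => simp [hk]
  have hlen : L + 1 = 2 * k := by
    have := congrArg List.length heq
    simp [hk] at this
    omega
  obtain ⟨j, hj, hne⟩ := hc a k hk1 (by omega)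
  apply hne
  have h1 : c (a + j) = l[j] := by
    have hidx : j < ((List.range' a (L+1)).map c).length := by simp; omega
    have e1 : ((List.range' a (L+1)).map c)[j] = c (a + j) := by
      simp [List.getElem_range'_1]
    rw [← e1]
    have : ((List.range' a (L+1)).map c)[j] = (l ++ l)[j]'(by simp; omega) := by
      congr 1
    rw [this, List.getElem_append_left (by omega)]
  have h2 : c (a + j + k) = l[j] := by
    have hidx : j + k < ((List.range' a (L+1)).map c).length := by simp; omega
    have e1 : ((List.range' a (L+1)).map c)[j+k] = c (a + (j+k)) := by
      simp [List.getElem_range'_1]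
    have e2 : ((List.range' a (L+1)).map c)[j+k]'hidx = (l ++ l)[j+k]'(by simp; omega) := by
      congr 1
    have e3 : (l ++ l)[j+k]'(by simp; omega) = l[j]'(by omega) := by
      rw [List.getElem_append_right (by omega)]
      congr 1
      omega
    have e4 : a + (j + k) = a + j + k := by omega
    rw [← e4, ← e1, e2, e3]
  rw [h1, h2]

lemma nonrepetitive_of_sqfree {β : Type*} (n : ℕ) (c : ℕ → β)
    (hc : ∀ a k, 1 ≤ k → a + 2*k ≤ n → ∃ j, j < k ∧ c (a+j) ≠ c (a+j+k)) :
    Nonrepetitive (pathGraph n) (fun v => c v.val) := by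
  intro u v p hp l hl hcontra
  have hmm : p.support.map (fun v => c v.val) = (p.support.map Fin.val).map c := by
    rw [List.map_map]; rfl
  rw [hmm] at hcontra
  rcases pathGraph_support n p hp with ⟨hsup, hv⟩ | ⟨hsup, hu⟩
  · rw [hsup] at hcontra
    exact no_square_of_range' hc (by have := v.isLt; omega) hl hcontra
  · rw [hsup] at hcontra
    rw [List.map_reverse] at hcontra
    have : (List.range' v.val (p.length+1)).map c = (l ++ l).reverse := by
      rw [← hcontra, List.reverse_reverse]
    rw [List.reverse_append] at this
    exact no_square_of_range' hc (by have := u.isLt; omega)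
      (by simpa using hl) this

lemma nonrep_adj_ne {V β : Type*} {G : SimpleGraph V} {φ : V → β}
    (hφ : Nonrepetitive G φ) {u v : V} (h : G.Adj u v) : φ u ≠ φ v := by
  intro he
  have hpath : (SimpleGraph.Walk.cons h SimpleGraph.Walk.nil).IsPath := by
    simp [SimpleGraph.Walk.isPath_def, h.ne]
  exact hφ _ hpath [φ v] (by simp) (by simp [he])

lemma nonrep_lb3 {n k : ℕ} (hn : 3 < n) (φ : Fin n → Fin k)
    (hφ : Nonrepetitive (pathGraph n) φ) : 3 ≤ k := by
  by_contra hlt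
  push_neg at hlt
  set v0 : Fin n := ⟨0, by omega⟩
  set v1 : Fin n := ⟨1, by omega⟩
  set v2 : Fin n := ⟨2, by omega⟩
  set v3 : Fin n := ⟨3, by omega⟩
  have a01 : (pathGraph n).Adj v0 v1 := pathGraph_adj.mpr (Or.inl rfl)
  have a12 : (pathGraph n).Adj v1 v2 := pathGraph_adj.mpr (Or.inl rfl)
  have a23 : (pathGraph n).Adj v2 v3 := pathGraph_adj.mpr (Or.inl rfl)
  have h01 := nonrep_adj_ne hφ a01
  have h12 := nonrep_adj_ne hφ a12
  have h23 := nonrep_adj_ne hφ a23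
  have hk2 : k ≤ 2 := by omega
  have h02 : φ v0 = φ v2 := by
    have := (φ v0).isLt; have := (φ v1).isLt; have := (φ v2).isLt
    have h1 : (φ v0).val ≠ (φ v1).val := fun he => h01 (Fin.ext he)
    have h2 : (φ v1).val ≠ (φ v2).val := fun he => h12 (Fin.ext he)
    exact Fin.ext (by omega)
  have h13 : φ v1 = φ v3 := by
    have := (φ v1).isLt; have := (φ v2).isLt; have := (φ v3).isLt
    have h1 : (φ v1).val ≠ (φ v2).val := fun he => h12 (Fin.ext he)
    have h2 : (φ v2).val ≠ (φ v3).val := fun he => h23 (Fin.ext he)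
    exact Fin.ext (by omega)
  have hpath : (SimpleGraph.Walk.cons a01 (SimpleGraph.Walk.cons a12
      (SimpleGraph.Walk.cons a23 SimpleGraph.Walk.nil))).IsPath := by
    simp [SimpleGraph.Walk.isPath_def]
    refine ⟨⟨?_, ?_, ?_⟩, ⟨?_, ?_⟩, ?_⟩ <;>
      (intro he; simp [v0, v1, v2, v3, Fin.ext_iff] at he)
  apply hφ _ hpath [φ v0, φ v1] (by simp)
  simp [← h02, ← h13]

def parityColor (i : ℕ) : Fin 2 := ⟨i % 2, by omega⟩

lemma parityColor_prop : ∀ m : ℕ, m ≤ 3 → ∀ a k, 1 ≤ k → a + 2*k ≤ m →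
    ∃ j, j < k ∧ parityColor (a+j) ≠ parityColor (a+j+k) := by
  intro m hm a k hk hb
  have hk1 : k = 1 := by omega
  subst hk1
  refine ⟨0, by omega, ?_⟩
  simp only [parityColor, Nat.add_zero, ne_eq, Fin.mk.injEq]
  omega

end aux2

theorem thue_pathGraph :
    thueNumber (pathGraph 1) = 1 ∧
    thueNumber (pathGraph 2) = 2 ∧
    thueNumber (pathGraph 3) = 2 ∧
    ∀ n : ℕ, 3 < n → thueNumber (pathGraph n) = 3 := by
  have lb2 : ∀ n : ℕ, 2 ≤ n → ∀ k : ℕ,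
      (∃ φ : Fin n → Fin k, Nonrepetitive (pathGraph n) φ) → 2 ≤ k := by
    rintro n hn k ⟨φ, hφ⟩
    set v0 : Fin n := ⟨0, by omega⟩
    set v1 : Fin n := ⟨1, by omega⟩
    have a01 : (pathGraph n).Adj v0 v1 := pathGraph_adj.mpr (Or.inl rfl)
    have h01 := nonrep_adj_ne hφ a01
    have h1 : (φ v0).val ≠ (φ v1).val := fun he => h01 (Fin.ext he)
    have := (φ v0).isLt
    have := (φ v1).isLt
    omega
  refine ⟨?_, ?_, ?_, ?_⟩
  · have hmem : 1 ∈ {k | ∃ φ : Fin 1 → Fin k, Nonrepetitive (pathGraph 1) φ} :=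
      ⟨fun v => (fun _ : ℕ => (0 : Fin 1)) v.val,
        nonrepetitive_of_sqfree 1 (fun _ => 0) (by intro a k hk hb; omega)⟩
    refine le_antisymm (Nat.sInf_le hmem) (le_csInf ⟨1, hmem⟩ ?_)
    rintro k ⟨φ, -⟩
    by_contra h
    push_neg at h
    interval_cases k
    exact (φ ⟨0, by omega⟩).elim0
  · have hmem : 2 ∈ {k | ∃ φ : Fin 2 → Fin k, Nonrepetitive (pathGraph 2) φ} :=
      ⟨fun v => parityColor v.val, nonrepetitive_of_sqfree 2 parityColor (parityColor_prop 2 (by omega))⟩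
    exact le_antisymm (Nat.sInf_le hmem) (le_csInf ⟨2, hmem⟩ (lb2 2 (by omega)))
  · have hmem : 2 ∈ {k | ∃ φ : Fin 3 → Fin k, Nonrepetitive (pathGraph 3) φ} :=
      ⟨fun v => parityColor v.val, nonrepetitive_of_sqfree 3 parityColor (parityColor_prop 3 (by omega))⟩
    exact le_antisymm (Nat.sInf_le hmem) (le_csInf ⟨2, hmem⟩ (lb2 3 (by omega)))
  · intro n hn
    have hmem : 3 ∈ {k | ∃ φ : Fin n → Fin k, Nonrepetitive (pathGraph n) φ} := by
      refine ⟨fun v => tern v.val, nonrepetitive_of_sqfree n tern ?_⟩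
      intro a k hk hb
      by_contra hcon
      push_neg at hcon
      exact tern_squareFree k hk a (fun j hj => hcon j hj)
    refine le_antisymm (Nat.sInf_le hmem) (le_csInf ⟨3, hmem⟩ ?_)
    rintro k ⟨φ, hφ⟩
    exact nonrep_lb3 hn φ hφ
end

section
/- For every n ≥ 1, the path graph P_n on n vertices satisfies π_ℓ(P_n) ≤ 4; that is, for every assignment of a list L(v) of colours with |L(v)| ≥ 4 to each vertex v of P_n, there exists a nonrepetitive vertex colouring of P_n choosing each vertex's colour from its list. -/
open SimpleGraph

namespace ThueAux

def NoSq (w : List ℕ) : Prop := ∀ l : List ℕ, l ≠ [] → ¬ (l ++ l) <:+: w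

lemma NoSq.of_infix {w v : List ℕ} (h : NoSq w) (hv : v <:+: w) : NoSq v :=
  fun l hl hi => h l hl (hi.trans hv)

lemma noSq_nil : NoSq [] := fun l hl hi =>
  hl (List.append_eq_nil_iff.mp (List.eq_nil_of_infix_nil hi)).1

def words (L : ℕ → Finset ℕ) : ℕ → Finset (List ℕ)
  | 0 => {[]}
  | (k+1) => (words L k).biUnion (fun w => (L k).image (fun a => w ++ [a]))

noncomputable instance : DecidablePred NoSq := Classical.decPred _

noncomputable def good (L : ℕ → Finset ℕ) (k : ℕ) : Finset (List ℕ) :=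
  (words L k).filter NoSq

lemma good_subset (L : ℕ → Finset ℕ) (k : ℕ) : good L k ⊆ words L k :=
  Finset.filter_subset _ _

lemma noSq_of_mem_good {L : ℕ → Finset ℕ} {k : ℕ} {w : List ℕ} (h : w ∈ good L k) :
    NoSq w := (Finset.mem_filter.mp h).2

lemma mem_good {L : ℕ → Finset ℕ} {k : ℕ} {w : List ℕ} (hw : w ∈ words L k)
    (hn : NoSq w) : w ∈ good L k := Finset.mem_filter.mpr ⟨hw, hn⟩

lemma length_of_mem_words {L : ℕ → Finset ℕ} : ∀ {k : ℕ} {w : List ℕ},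
    w ∈ words L k → w.length = k := by
  intro k
  induction k with
  | zero => intro w hw; simp [words] at hw; simp [hw]
  | succ k ih =>
    intro w hw
    simp only [words, Finset.mem_biUnion, Finset.mem_image] at hw
    obtain ⟨u, hu, a, _, rfl⟩ := hw
    simp [ih hu]

lemma take_mem_words {L : ℕ → Finset ℕ} : ∀ {k : ℕ} {w : List ℕ},
    w ∈ words L k → ∀ {j : ℕ}, j ≤ k → w.take j ∈ words L j := by
  intro k
  induction k with
  | zero => intro w hw j hj; interval_cases j; simpa [words] using hw
  | succ k ih =>
    intro w hw j hj
    simp only [words, Finset.mem_biUnion, Finset.mem_image] at hw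
    obtain ⟨u, hu, a, ha, rfl⟩ := hw
    rcases Nat.lt_or_ge j (k+1) with h | h
    · have hjk : j ≤ k := Nat.lt_succ_iff.mp h
      rw [List.take_append_of_le_length (by rw [length_of_mem_words hu]; exact hjk)]
      exact ih hu hjk
    · have : j = k + 1 := le_antisymm hj h
      subst this
      rw [List.take_of_length_le (by simp [length_of_mem_words hu])]
      simp only [words, Finset.mem_biUnion, Finset.mem_image]
      exact ⟨u, hu, a, ha, rfl⟩

lemma get_mem_of_mem_words {L : ℕ → Finset ℕ} : ∀ {k : ℕ} {w : List ℕ},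
    w ∈ words L k → ∀ {i : ℕ} (h : i < w.length), w.get ⟨i, h⟩ ∈ L i := by
  intro k
  induction k with
  | zero => intro w hw i h; simp [words] at hw; subst hw; simp at h
  | succ k ih =>
    intro w hw i h
    simp only [words, Finset.mem_biUnion, Finset.mem_image] at hw
    obtain ⟨u, hu, a, ha, rfl⟩ := hw
    have hul : u.length = k := length_of_mem_words hu
    rcases Nat.lt_or_ge i u.length with h' | h'
    · have := ih hu h'
      rw [List.get_eq_getElem] at this ⊢
      rw [List.getElem_append_left h']
      exact this
    · have hik : i = k := by
        have : i < u.length + 1 := by simpa using h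
        omega
      have hget : (u ++ [a]).get ⟨i, h⟩ = a := by
        rw [List.get_eq_getElem, List.getElem_append_right h']
        simp [show i - u.length = 0 by omega]
      rw [hget, hik]; exact ha


lemma infix_concat {x w : List ℕ} {a : ℕ} (h : x <:+: (w ++ [a])) :
    x <:+: w ∨ x <:+ (w ++ [a]) := by
  obtain ⟨s, t, hst⟩ := h
  rcases List.eq_nil_or_concat t with rfl | ⟨t', b, rfl⟩
  · right; exact ⟨s, by simpa using hst⟩
  · left
    have h1 : (s ++ x ++ t') ++ [b] = w ++ [a] := by
      rw [← hst]; simp [List.append_assoc]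
    have h2 := List.append_inj' h1 rfl
    exact ⟨s, t', h2.1⟩

lemma key (L : ℕ → Finset ℕ) (hL : ∀ i, 4 ≤ (L i).card) (k : ℕ) :
    4 * (good L k).card ≤ (good L (k+1)).card + ∑ j ∈ Finset.range (k+1), (good L j).card := by
  classical
  set E : Finset (List ℕ) := (good L k).biUnion (fun w => (L k).image (fun a => w ++ [a])) with hE
  have cardE : E.card = (good L k).card * (L k).card := by
    rw [hE, Finset.card_biUnion]
    · rw [Finset.sum_congr rfl (fun w _ => Finset.card_image_of_injective _ (fun a b h => by
        simpa using List.append_cancel_left h))]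
      simp [Finset.sum_const, Nat.mul_comm]
    · intro w1 h1 w2 h2 hne
      simp only [Finset.disjoint_left, Finset.mem_image]
      rintro v ⟨a, _, rfl⟩ ⟨b, _, hab⟩
      apply hne
      have h3 := congrArg List.dropLast hab
      simp only [List.dropLast_concat] at h3
      exact h3.symm
  have hEwords : E ⊆ words L (k+1) := by
    intro v hv
    rw [hE, Finset.mem_biUnion] at hv
    obtain ⟨w, hw, hv⟩ := hv
    rw [Finset.mem_image] at hv
    obtain ⟨a, ha, rfl⟩ := hv
    simp only [words, Finset.mem_biUnion, Finset.mem_image]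
    exact ⟨w, good_subset L k hw, a, ha, rfl⟩
  have hbad : E \ good L (k+1) ⊆ (Finset.range (k+1)).biUnion
      (fun j => (good L j).image (fun p => p ++ p.drop (2*j - (k+1)))) := by
    intro v hv
    rw [Finset.mem_sdiff] at hv
    obtain ⟨hvE, hvN⟩ := hv
    have hvw : v ∈ words L (k+1) := hEwords hvE
    rw [hE, Finset.mem_biUnion] at hvE
    obtain ⟨w, hwg, hv2⟩ := hvE
    rw [Finset.mem_image] at hv2
    obtain ⟨a, ha, rfl⟩ := hv2
    have hwN : NoSq w := noSq_of_mem_good hwg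
    have hwl : w.length = k := length_of_mem_words (good_subset L k hwg)
    -- v not square-free
    have : ¬ NoSq (w ++ [a]) := fun h => hvN (mem_good hvw h)
    rw [NoSq] at this
    push_neg at this
    obtain ⟨l, hl, hinf⟩ := this
    rcases infix_concat hinf with h | h
    · exact absurd h (hwN l hl)
    obtain ⟨u, hu⟩ := h
    -- lengths
    have hll : 1 ≤ l.length := List.length_pos_iff.mpr hl
    have hlen : u.length + 2 * l.length = k + 1 := by
      have := congrArg List.length hu
      simp [hwl] at this
      omega
    set j := k + 1 - l.length with hj
    have hjk : j < k + 1 := by omega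
    refine Finset.mem_biUnion.mpr ⟨j, Finset.mem_range.mpr hjk, ?_⟩
    rw [Finset.mem_image]
    refine ⟨u ++ l, ?_, ?_⟩
    · -- u ++ l ∈ good L j
      have htake : (w ++ [a]).take j = u ++ l := by
        rw [← hu]
        have : u ++ (l ++ l) = (u ++ l) ++ l := by simp [List.append_assoc]
        rw [this]
        have hlj : (u ++ l).length = j := by simp; omega
        rw [← hlj, List.take_left]
      have hmemw : u ++ l ∈ words L j := by
        rw [← htake]; exact take_mem_words hvw (le_of_lt hjk)
      refine mem_good hmemw ?_
      have hpw : (u ++ l) <:+: w := by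
        have h2 : (w ++ [a]).take j = w.take j :=
          List.take_append_of_le_length (by omega)
        rw [h2] at htake
        rw [← htake]
        exact (List.take_prefix _ _).isInfix
      exact NoSq.of_infix hwN hpw
    · -- (u ++ l) ++ (u ++ l).drop (2*j-(k+1)) = w ++ [a]
      have hdrop : (u ++ l).drop (2*j - (k+1)) = l := by
        have : 2*j - (k+1) = u.length := by omega
        rw [this, List.drop_left]
      rw [hdrop, ← hu, List.append_assoc]
  -- assemble
  have hsplit : E.card ≤ (good L (k+1)).card + (E \ good L (k+1)).card := by
    have h1 := Finset.card_inter_add_card_sdiff E (good L (k+1))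
    have h2 : (E ∩ good L (k+1)).card ≤ (good L (k+1)).card :=
      Finset.card_le_card Finset.inter_subset_right
    omega
  have hbadcard : (E \ good L (k+1)).card ≤ ∑ j ∈ Finset.range (k+1), (good L j).card := by
    refine le_trans (Finset.card_le_card hbad) ?_
    refine le_trans (Finset.card_biUnion_le) ?_
    exact Finset.sum_le_sum (fun j _ => Finset.card_image_le)
  calc 4 * (good L k).card ≤ (good L k).card * (L k).card := by
        rw [mul_comm]; exact Nat.mul_le_mul_left _ (hL k)
    _ = E.card := cardE.symm
    _ ≤ (good L (k+1)).card + (E \ good L (k+1)).card := hsplit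
    _ ≤ (good L (k+1)).card + ∑ j ∈ Finset.range (k+1), (good L j).card := by omega


lemma good_zero_card (L : ℕ → Finset ℕ) : (good L 0).card = 1 := by
  classical
  have : good L 0 = {[]} := by
    rw [good]
    show Finset.filter NoSq ({[]} : Finset (List ℕ)) = {[]}
    rw [Finset.filter_singleton, if_pos noSq_nil]
  rw [this]; rfl

lemma ratio (L : ℕ → Finset ℕ) (hL : ∀ i, 4 ≤ (L i).card) : ∀ k,
    2 * (good L k).card ≤ (good L (k+1)).card ∧
    ∑ j ∈ Finset.range (k+1), (good L j).card ≤ 2 * (good L k).card := by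
  intro k
  induction k with
  | zero =>
    have h := key L hL 0
    simp [Finset.sum_range_one, good_zero_card] at h ⊢
    omega
  | succ k ih =>
    obtain ⟨h1, h2⟩ := ih
    have hsum : ∑ j ∈ Finset.range ((k+1)+1), (good L j).card ≤ 2 * (good L (k+1)).card := by
      rw [Finset.sum_range_succ]
      omega
    have h := key L hL (k+1)
    exact ⟨by omega, hsum⟩

lemma good_card_pos (L : ℕ → Finset ℕ) (hL : ∀ i, 4 ≤ (L i).card) (k : ℕ) :
    1 ≤ (good L k).card := by
  induction k with
  | zero => simp [good_zero_card]
  | succ k ih => have := (ratio L hL k).1; omega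

lemma exists_noSq_transversal (L : ℕ → Finset ℕ) (hL : ∀ i, 4 ≤ (L i).card) (n : ℕ) :
    ∃ w : List ℕ, w.length = n ∧ (∀ (i : ℕ) (h : i < w.length), w.get ⟨i, h⟩ ∈ L i) ∧
      NoSq w := by
  obtain ⟨w, hw⟩ := Finset.card_pos.mp (good_card_pos L hL n)
  exact ⟨w, length_of_mem_words (good_subset L n hw),
    fun i h => get_mem_of_mem_words (good_subset L n hw) h, noSq_of_mem_good hw⟩

end ThueAux


namespace ThuePath

lemma mem_of_val_mem {n : ℕ} {a : Fin n} {l : List (Fin n)} (h : a.val ∈ l.map Fin.val) :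
    a ∈ l := by
  obtain ⟨x, hx, hxv⟩ := List.mem_map.mp h
  rwa [show x = a from Fin.ext hxv] at hx

lemma support_run {n : ℕ} : ∀ {u v : Fin n} (p : (pathGraph n).Walk u v), p.IsPath →
    (p.support.map Fin.val = List.range' u.val p.support.length) ∨
    ((p.support.map Fin.val).reverse = List.range' v.val p.support.length) := by
  intro u v p
  induction p with
  | nil =>
    intro _
    left
    simp [List.range'_succ]
  | @cons a b c h q ih =>
    intro hp
    rw [Walk.cons_isPath_iff] at hp
    obtain ⟨hq, ha⟩ := hp
    have hadj : a.val + 1 = b.val ∨ b.val + 1 = a.val := pathGraph_adj.mp h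
    have hpos : 0 < q.support.length := List.length_pos_iff.mpr q.support_ne_nil
    obtain ⟨m, hm⟩ : ∃ m, q.support.length = m + 1 := ⟨q.support.length - 1, by omega⟩
    have hcons : q.support = b :: q.support.tail := q.support_eq_cons
    rcases ih hq with hA | hB
    · rcases hadj with h1 | h2
      · left
        simp only [Walk.support_cons, List.map_cons, List.length_cons]
        rw [hA, ← h1, List.range'_succ]
      · rcases Nat.lt_or_ge q.support.length 2 with hl | hl
        · -- support length 1, so q.support = [b] and c = b
          have h1 : q.support.tail = [] := by
            have hlc := congrArg List.length hcons
            rw [List.length_cons] at hlc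
            exact List.eq_nil_of_length_eq_zero (by omega)
          have hsup : q.support = [b] := by rw [hcons, h1]
          have hcb : c = b := by
            have := q.end_mem_support
            rw [hsup] at this
            simpa using this
          right
          subst hcb
          simp only [Walk.support_cons, hsup, List.map_cons, List.map_nil,
            List.reverse_cons, List.reverse_nil, List.length_cons, List.length_singleton]
          rw [List.range'_succ, ← h2]
          simp [List.range'_succ]
        · exfalso
          have hmem : a.val ∈ List.map Fin.val q.support := by
            rw [hA, List.mem_range'_1]
            omega
          exact ha (mem_of_val_mem hmem)
    · -- hB : reverse = range' c.val len
      have hsrev : q.support.map Fin.val = (List.range' c.val (m+1)).reverse := by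
        rw [← hm, ← hB, List.reverse_reverse]
      have hhead : b.val = c.val + m := by
        have h1 : q.support.map Fin.val = b.val :: (q.support.tail.map Fin.val) := by
          rw [hcons]; rfl
        rw [h1, List.range'_concat, List.reverse_append] at hsrev
        simp at hsrev
        exact hsrev.1
      rcases hadj with h1 | h2
      · -- a.val + 1 = b.val : possible contradiction or m = 0
        rcases Nat.eq_zero_or_pos m with hm0 | hm0
        · -- m = 0 : q.support = [b], c.val = b.val
          subst hm0
          have h1' : q.support.tail = [] := by
            have hlc := congrArg List.length hcons
            rw [List.length_cons] at hlc
            exact List.eq_nil_of_length_eq_zero (by omega)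
          have hsup : q.support = [b] := by rw [hcons, h1']
          left
          simp only [Walk.support_cons, hsup, List.map_cons, List.map_nil, List.length_cons,
            List.length_singleton]
          rw [List.range'_succ, h1]
          simp [List.range'_succ]
        · exfalso
          have hmem : a.val ∈ (List.map Fin.val q.support).reverse := by
            rw [hB, List.mem_range'_1]
            omega
          rw [List.mem_reverse] at hmem
          exact ha (mem_of_val_mem hmem)
      · -- b.val + 1 = a.val : extend on the right
        right
        simp only [Walk.support_cons, List.map_cons, List.reverse_cons, List.length_cons]
        rw [hB, hm]
        conv_rhs => rw [List.range'_concat]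
        congr 1
        simp only [List.cons.injEq, and_true]
        omega


lemma range'_infix {a m n : ℕ} (h : a + m ≤ n) : List.range' a m <:+: List.range n := by
  refine ⟨List.range' 0 a, List.range' (a + m) (n - (a + m)), ?_⟩
  rw [List.range_eq_range']
  have h1 : List.range' 0 a ++ List.range' (0 + a) m = List.range' 0 (m + a) :=
    by rw [Nat.add_comm m a]; exact List.range'_append_1
  have h2 : List.range' 0 (a + m) ++ List.range' (0 + (a + m)) (n - (a + m)) =
      List.range' 0 ((n - (a + m)) + (a + m)) := by
        rw [Nat.add_comm (n - (a + m))]; exact List.range'_append_1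
  rw [Nat.add_comm m a] at h1
  simp only [Nat.zero_add] at h1 h2
  rw [h1, h2]
  congr 1
  omega

lemma nonrep_of_noSq {n : ℕ} (φ : Fin n → ℕ) (f : ℕ → ℕ)
    (hf : ∀ v : Fin n, f v.val = φ v)
    (hNS : ThueAux.NoSq ((List.range n).map f)) :
    Nonrepetitive (pathGraph n) φ := by
  intro u v p hp l hl heq
  have hmap : p.support.map φ = (p.support.map Fin.val).map f := by
    rw [List.map_map]
    exact List.map_congr_left (fun x _ => (hf x).symm)
  have hlen : 0 < p.support.length := List.length_pos_iff.mpr p.support_ne_nil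
  rcases support_run p hp with hA | hB
  · have hbound : u.val + p.support.length ≤ n := by
      have hmem : u.val + (p.support.length - 1) ∈ List.range' u.val p.support.length := by
        rw [List.mem_range'_1]; omega
      rw [← hA] at hmem
      obtain ⟨x, _, hx⟩ := List.mem_map.mp hmem
      have := x.isLt
      omega
    refine hNS l hl ?_
    rw [← heq, hmap, hA]
    exact (range'_infix hbound).map f
  · have hbound : v.val + p.support.length ≤ n := by
      have hmem : v.val + (p.support.length - 1) ∈ List.range' v.val p.support.length := by
        rw [List.mem_range'_1]; omega
      rw [← hB] at hmem
      rw [List.mem_reverse] at hmem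
      obtain ⟨x, _, hx⟩ := List.mem_map.mp hmem
      have := x.isLt
      omega
    refine hNS l.reverse (fun hrev => hl (by simpa using congrArg List.reverse hrev)) ?_
    have hrev : (p.support.map φ).reverse = l.reverse ++ l.reverse := by
      rw [heq, List.reverse_append]
    rw [← hrev, hmap, ← List.map_reverse, hB]
    exact (range'_infix hbound).map f

end ThuePath

open ThuePath

theorem thueChoice_pathGraph (n : ℕ) (hn : 1 ≤ n) :
    thueChoiceNumber (pathGraph n) ≤ 4 := by
  apply Nat.sInf_le
  simp only [Set.mem_setOf_eq]
  intro L hLc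
  classical
  set L' : ℕ → Finset ℕ := fun i => if h : i < n then L ⟨i, h⟩ else Finset.range 4 with hL'def
  have hL4 : ∀ i, 4 ≤ (L' i).card := by
    intro i
    rw [hL'def]
    dsimp only
    split
    · exact hLc _
    · simp
  obtain ⟨w, hwlen, hwmem, hwns⟩ := ThueAux.exists_noSq_transversal L' hL4 n
  refine ⟨fun v => w.get ⟨v.val, by rw [hwlen]; exact v.isLt⟩, ?_, ?_⟩
  · intro v
    have h := hwmem v.val (by rw [hwlen]; exact v.isLt)
    rw [hL'def] at h
    dsimp only at h
    rw [dif_pos v.isLt] at h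
    simpa using h
  · apply nonrep_of_noSq _ (fun i => w.getD i 0)
    · intro v
      have hv : v.val < w.length := by rw [hwlen]; exact v.isLt
      simp [List.getD_eq_getElem?_getD, List.getElem?_eq_getElem hv]
    · have heq : (List.range n).map (fun i => w.getD i 0) = w := by
        apply List.ext_getElem
        · simp [hwlen]
        · intro i h1 h2
          simp only [List.getElem_map, List.getElem_range]
          exact List.getD_eq_getElem w 0 h2 ▸ rfl
      rw [heq]
      exact hwns
end
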